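/- arXiv:1412.8011 — 4 statements merged into one kernel-verified Lean document; each statement's English description precedes it below -/
import Mathlib

section
/- Let u : ℝⁿ → ℝ be continuous. Then u is a viscosity subsolution of H(Du) = 0 on ℝⁿ (meaning: for every C¹ function φ : ℝⁿ → ℝ and every local maximum point x₀ of u − φ one has H(Dφ(x₀)) ≤ 0) if and only if u(x) − u(y) ≤ ℓ(x − y) for all x, y ∈ ℝⁿ. -/
abbrev Eu (n : ℕ) : Type := EuclideanSpace ℝ (Fin n)

open scoped RealInnerProductSpace
open Filter Metric

section aux
variable {n : ℕ} {H ℓ : Eu n → ℝ}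


variable (hH : Continuous H) (hH0 : H 0 < 0)
    (hKcpt : IsCompact {p : Eu n | H p ≤ 0})
    (hKconv : StrictConvex ℝ {p : Eu n | H p ≤ 0})
    (hℓ : ∀ v, IsGreatest {r : ℝ | ∃ p, H p ≤ 0 ∧ ⟪p, v⟫ = r} (ℓ v))

include hℓ

theorem ell_le {p v : Eu n} (hp : H p ≤ 0) : ⟪p, v⟫ ≤ ℓ v := (hℓ v).2 ⟨p, hp, rfl⟩

theorem ell_ex (v : Eu n) : ∃ p, H p ≤ 0 ∧ ⟪p, v⟫ = ℓ v := (hℓ v).1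

theorem ell_zero (hH0 : H 0 < 0) : ℓ 0 = 0 := by
  have h1 := ell_le hℓ (v := 0) (p := 0) (le_of_lt hH0)
  have h2 : ⟪(0: Eu n), (0: Eu n)⟫ = (0:ℝ) := inner_zero_right 0
  obtain ⟨p, hp, hpe⟩ := (hℓ 0).1
  have : ⟪p, (0: Eu n)⟫ = (0:ℝ) := inner_zero_right p
  have := hpe ▸ this
  rw [h2] at h1
  linarith

theorem ell_smul {v : Eu n} {c : ℝ} (hc : 0 < c) : ℓ (c • v) = c * ℓ v := by
  obtain ⟨p, hp, hpe⟩ := (hℓ v).1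
  have h1 : c * ℓ v ≤ ℓ (c • v) := by
    have := ell_le hℓ (v := c • v) hp
    rwa [real_inner_smul_right, hpe] at this
  obtain ⟨q, hq, hqe⟩ := (hℓ (c • v)).1
  have h2 : ⟪q, v⟫ ≤ ℓ v := ell_le hℓ hq
  nlinarith [real_inner_smul_right q v c ▸ hqe]

include hH0

theorem ell_nonneg (v : Eu n) : 0 ≤ ℓ v := by
  have := ell_le hℓ (v := v) (p := 0) (le_of_lt hH0)
  rwa [inner_zero_left] at this

include hH

theorem ell_pos {v : Eu n} (hv : v ≠ 0) : 0 < ℓ v := by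
  obtain ⟨ρ, hρ, hball⟩ := Metric.isOpen_iff.1 (isOpen_lt hH continuous_const) 0 hH0
  set p : Eu n := (ρ / (2 * ‖v‖)) • v with hp
  have hvn : 0 < ‖v‖ := norm_pos_iff.2 hv
  have hpK : H p ≤ 0 := by
    have : p ∈ Metric.ball (0: Eu n) ρ := by
      rw [mem_ball_zero_iff, hp, norm_smul]
      rw [Real.norm_eq_abs, abs_of_pos (by positivity)]
      rw [div_mul_eq_mul_div, mul_comm]
      rw [div_lt_iff₀ (by positivity)]
      nlinarith
    exact le_of_lt (hball this)
  have h1 := ell_le hℓ (v := v) hpK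
  have h2 : ⟪p, v⟫ = ρ / (2 * ‖v‖) * ‖v‖ ^ 2 := by
    rw [hp, real_inner_smul_left, real_inner_self_eq_norm_sq]
  have h3 : 0 < ρ / (2 * ‖v‖) * ‖v‖ ^ 2 := by positivity
  linarith

end aux

section P
variable {n : ℕ} {H ℓ : Eu n → ℝ} {P : Eu n → Eu n}
variable (hH : Continuous H) (hH0 : H 0 < 0)
    (hKcpt : IsCompact {p : Eu n | H p ≤ 0})
    (hKconv : StrictConvex ℝ {p : Eu n | H p ≤ 0})
    (hℓ : ∀ v, IsGreatest {r : ℝ | ∃ p, H p ≤ 0 ∧ ⟪p, v⟫ = r} (ℓ v))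
    (hP : ∀ v, H (P v) ≤ 0 ∧ ⟪P v, v⟫ = ℓ v)

include hKconv hℓ in
theorem argmax_uniq {v p q : Eu n} (hv : v ≠ 0) (hp : H p ≤ 0) (hq : H q ≤ 0)
    (hpe : ⟪p, v⟫ = ℓ v) (hqe : ⟪q, v⟫ = ℓ v) : p = q := by
  by_contra hne
  have hm : (1/2 : ℝ) • p + (1/2 : ℝ) • q ∈ interior {p : Eu n | H p ≤ 0} :=
    hKconv hp hq hne (a := (1/2 : ℝ)) (b := (1/2 : ℝ)) (by norm_num) (by norm_num) (by norm_num)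
  obtain ⟨ε, hε, hball⟩ := Metric.isOpen_iff.1 isOpen_interior _ hm
  set m : Eu n := (1/2 : ℝ) • p + (1/2 : ℝ) • q with hmdef
  have hvn : 0 < ‖v‖ := norm_pos_iff.2 hv
  set m' : Eu n := m + (ε / (2 * ‖v‖)) • v with hm'def
  have hm'K : H m' ≤ 0 := by
    have : m' ∈ Metric.ball m ε := by
      rw [Metric.mem_ball, dist_eq_norm, hm'def]
      simp only [add_sub_cancel_left]
      rw [norm_smul, Real.norm_eq_abs, abs_of_pos (by positivity)]
      rw [div_mul_eq_mul_div, mul_comm, div_lt_iff₀ (by positivity)]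
      nlinarith
    have h := interior_subset (hball this)
    exact h
  have h1 : ⟪m', v⟫ ≤ ℓ v := ell_le hℓ hm'K
  have h2 : ⟪m', v⟫ = ℓ v + ε / (2 * ‖v‖) * ‖v‖ ^ 2 := by
    rw [hm'def, inner_add_left, real_inner_smul_left, real_inner_self_eq_norm_sq,
      hmdef, inner_add_left, real_inner_smul_left, real_inner_smul_left, hpe, hqe]
    ring
  have : 0 < ε / (2 * ‖v‖) * ‖v‖ ^ 2 := by positivity
  linarith

include hKcpt in
theorem K_bound : ∃ C : ℝ, 0 < C ∧ ∀ p : Eu n, H p ≤ 0 → ‖p‖ ≤ C := by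
  obtain ⟨C, hC⟩ := hKcpt.isBounded.exists_norm_le
  exact ⟨max C 1, lt_of_lt_of_le one_pos (le_max_right _ _),
    fun p hp => le_trans (hC p hp) (le_max_left _ _)⟩

include hℓ hP in
theorem ell_lip {C : ℝ} (hC : ∀ p : Eu n, H p ≤ 0 → ‖p‖ ≤ C) (v w : Eu n) :
    ℓ v - ℓ w ≤ C * ‖v - w‖ := by
  have h1 : ⟪P v, w⟫ ≤ ℓ w := ell_le hℓ (hP v).1
  have h2 : ⟪P v, v⟫ = ℓ v := (hP v).2
  have h3 : ⟪P v, v - w⟫ ≤ ‖P v‖ * ‖v - w‖ := real_inner_le_norm _ _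
  have h4 : ‖P v‖ * ‖v - w‖ ≤ C * ‖v - w‖ :=
    mul_le_mul_of_nonneg_right (hC _ (hP v).1) (norm_nonneg _)
  have h5 : ⟪P v, v - w⟫ = ⟪P v, v⟫ - ⟪P v, w⟫ := inner_sub_right _ _ _
  linarith

include hℓ hP in
theorem ell_continuous {C : ℝ} (hC : ∀ p : Eu n, H p ≤ 0 → ‖p‖ ≤ C) : Continuous ℓ := by
  have hC0 : 0 ≤ C := le_trans (norm_nonneg _) (hC _ (hP 0).1)
  apply LipschitzWith.continuous (K := ⟨C, hC0⟩)
  apply LipschitzWith.of_dist_le_mul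
  intro v w
  rw [Real.dist_eq, dist_eq_norm]
  change |ℓ v - ℓ w| ≤ C * ‖v - w‖
  rcases abs_cases (ℓ v - ℓ w) with ⟨h, _⟩ | ⟨h, _⟩
  · rw [h]; exact ell_lip hℓ hP hC v w
  · rw [h]
    have := ell_lip hℓ hP hC w v
    rw [norm_sub_rev] at this
    linarith

include hKcpt hKconv hℓ hP in
theorem P_continuousAt {C : ℝ} (hC : ∀ p : Eu n, H p ≤ 0 → ‖p‖ ≤ C) (hC0 : 0 < C)
    {v₀ : Eu n} (hv₀ : v₀ ≠ 0) : ContinuousAt P v₀ := by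
  rw [ContinuousAt, _root_.tendsto_nhds]
  intro U hU hPU
  rcases Set.eq_empty_or_nonempty ({p : Eu n | H p ≤ 0} \ U) with hS | hSne
  · filter_upwards with v
    have : P v ∈ {p : Eu n | H p ≤ 0} := (hP v).1
    by_contra hout
    exact absurd hS (Set.nonempty_iff_ne_empty.1 ⟨P v, this, hout⟩)
  · have hcont : ContinuousOn (fun p : Eu n => (⟪p, v₀⟫ : ℝ)) ({p : Eu n | H p ≤ 0} \ U) :=
      (Continuous.inner continuous_id continuous_const).continuousOn
    obtain ⟨p₁, hp₁S, hmax⟩ := (hKcpt.diff hU).exists_isMaxOn hSne hcont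
    have hp₁K : H p₁ ≤ 0 := hp₁S.1
    have hδpos : 0 < ℓ v₀ - ⟪p₁, v₀⟫ := by
      rcases lt_or_eq_of_le (ell_le hℓ (v := v₀) hp₁K) with h | h
      · linarith
      · exact absurd (argmax_uniq hKconv hℓ hv₀ hp₁K (hP v₀).1 h (hP v₀).2 ▸ hPU) hp₁S.2
    set δ : ℝ := ℓ v₀ - ⟪p₁, v₀⟫ with hδdef
    have hr : 0 < δ / (2 * C + 2) := by positivity
    filter_upwards [Metric.ball_mem_nhds v₀ hr] with v hv
    rw [Metric.mem_ball, dist_eq_norm] at hv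
    by_contra hout
    have hPvS : P v ∈ {p : Eu n | H p ≤ 0} \ U := ⟨(hP v).1, hout⟩
    have h1 : ⟪P v, v₀⟫ ≤ ⟪p₁, v₀⟫ := hmax hPvS
    have h2 : ⟪P v, v - v₀⟫ ≤ C * ‖v - v₀‖ :=
      le_trans (real_inner_le_norm _ _)
        (mul_le_mul_of_nonneg_right (hC _ (hP v).1) (norm_nonneg _))
    have h3 : ℓ v₀ - ℓ v ≤ C * ‖v₀ - v‖ := ell_lip hℓ hP hC v₀ v
    have h4 : ⟪P v, v⟫ = ℓ v := (hP v).2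
    have h5 : ⟪P v, v⟫ = ⟪P v, v₀⟫ + ⟪P v, v - v₀⟫ := by
      rw [← inner_add_right]
      congr 1
      abel
    rw [norm_sub_rev v₀ v] at h3
    have h6 : δ ≤ 2 * C * ‖v - v₀‖ := by linarith
    have e1 : δ / (2 * C + 2) * (2 * C + 2) = δ := div_mul_cancel₀ _ (by positivity)
    nlinarith [norm_nonneg (v - v₀), hr,
      mul_lt_mul_of_pos_left hv (by positivity : (0:ℝ) < 2 * C)]


include hKcpt hKconv hℓ hP in
theorem ell_hasFDerivAt {C : ℝ} (hC : ∀ p : Eu n, H p ≤ 0 → ‖p‖ ≤ C) (hC0 : 0 < C)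
    {v : Eu n} (hv : v ≠ 0) : HasFDerivAt ℓ ((innerSL ℝ) (P v)) v := by
  refine HasFDerivAt.of_isLittleO ?_
  rw [Asymptotics.isLittleO_iff]
  intro c hc
  have hcont := P_continuousAt hKcpt hKconv hℓ hP hC hC0 hv
  have hev : ∀ᶠ w in nhds v, ‖P w - P v‖ ≤ c := by
    have := hcont.tendsto
    rw [Metric.tendsto_nhds] at this
    filter_upwards [this c hc] with w hw
    rw [dist_eq_norm] at hw
    exact le_of_lt hw
  filter_upwards [hev] with w hw
  have e0 : (innerSL ℝ) (P v) (w - v) = ⟪P v, w - v⟫ := rfl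
  have l1 : ⟪P v, w⟫ ≤ ℓ w := ell_le hℓ (hP v).1
  have l2 : ⟪P w, v⟫ ≤ ℓ v := ell_le hℓ (hP w).1
  have l3 : ⟪P v, v⟫ = ℓ v := (hP v).2
  have l4 : ⟪P w, w⟫ = ℓ w := (hP w).2
  have d1 : ⟪P v, w - v⟫ = ⟪P v, w⟫ - ⟪P v, v⟫ := inner_sub_right _ _ _
  have d2 : ⟪P w - P v, w - v⟫ = ⟪P w, w⟫ - ⟪P w, v⟫ - ⟪P v, w⟫ + ⟪P v, v⟫ := by
    rw [inner_sub_left, inner_sub_right, inner_sub_right]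
    ring
  have hub : ℓ w - ℓ v - ⟪P v, w - v⟫ ≤ ⟪P w - P v, w - v⟫ := by linarith
  have hlb : 0 ≤ ℓ w - ℓ v - ⟪P v, w - v⟫ := by linarith
  have hcs : ⟪P w - P v, w - v⟫ ≤ ‖P w - P v‖ * ‖w - v‖ := real_inner_le_norm _ _
  rw [e0, Real.norm_eq_abs, abs_of_nonneg hlb]
  calc ℓ w - ℓ v - ⟪P v, w - v⟫ ≤ ‖P w - P v‖ * ‖w - v‖ := by linarith
    _ ≤ c * ‖w - v‖ := mul_le_mul_of_nonneg_right hw (norm_nonneg _)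

include hKcpt hKconv hℓ hP in
theorem ell_contDiffOn {C : ℝ} (hC : ∀ p : Eu n, H p ≤ 0 → ‖p‖ ≤ C) (hC0 : 0 < C) :
    ContDiffOn ℝ 1 ℓ {v : Eu n | v ≠ 0} := by
  have hopen : IsOpen {v : Eu n | v ≠ 0} := isOpen_compl_singleton
  have key : ∀ v ∈ {v : Eu n | v ≠ 0}, fderiv ℝ ℓ v = (innerSL ℝ) (P v) := fun v hv =>
    (ell_hasFDerivAt hKcpt hKconv hℓ hP hC hC0 hv).fderiv
  have hPc : ContinuousOn P {v : Eu n | v ≠ 0} := fun v hv =>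
    (P_continuousAt hKcpt hKconv hℓ hP hC hC0 hv).continuousWithinAt
  have : ContDiffOn ℝ (0 + 1) ℓ {v : Eu n | v ≠ 0} := by
    rw [contDiffOn_succ_iff_fderiv_of_isOpen hopen]
    refine ⟨fun v hv => (ell_hasFDerivAt hKcpt hKconv hℓ hP hC hC0 hv).differentiableAt.differentiableWithinAt, by simp, ?_⟩
    rw [contDiffOn_zero]
    exact ContinuousOn.congr (((innerSL ℝ).continuous.comp_continuousOn hPc)) key
  simpa using this

include hKcpt hKconv hℓ in
theorem mem_K_of_inner_le {q : Eu n} (h : ∀ v, ⟪q, v⟫ ≤ ℓ v) : H q ≤ 0 := by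
  by_contra hq
  have hqK : q ∉ {p : Eu n | H p ≤ 0} := fun hmem => hq hmem
  obtain ⟨f, u', hfu, huf⟩ := geometric_hahn_banach_closed_point (hKconv.convex)
    (hKcpt.isClosed) hqK
  set v : Eu n := (InnerProductSpace.toDual ℝ (Eu n)).symm f with hv
  have hfa : ∀ a : Eu n, f a = ⟪a, v⟫ := fun a => by
    rw [real_inner_comm]
    exact (InnerProductSpace.toDual_symm_apply).symm
  obtain ⟨p, hpK, hpe⟩ := (hℓ v).1
  have h1 : f p < u' := hfu p hpK
  have h2 := h v
  rw [hfa p] at h1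
  rw [hfa q] at huf
  linarith

include hH hH0 hKcpt hKconv hℓ hP in
set_option maxHeartbeats 2000000 in
theorem key_claim {C : ℝ} (hC : ∀ p : Eu n, H p ≤ 0 → ‖p‖ ≤ C) (hC0 : 0 < C)
    {u : Eu n → ℝ} (hu : Continuous u)
    (hsub : ∀ φ : Eu n → ℝ, ContDiff ℝ 1 φ →
        ∀ x₀, IsLocalMax (fun w => u w - φ w) x₀ → H (gradient φ x₀) ≤ 0)
    {x y : Eu n} {R δ ε : ℝ} (hR : ‖x - y‖ < R) (hδ : 0 < δ) (hε : 0 < ε) :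
    u x - u y ≤ (1 + δ) * ℓ (x - y) + ε / (R ^ 2 - ‖x - y‖ ^ 2) := by
  have hR0 : 0 < R := lt_of_le_of_lt (norm_nonneg _) hR
  set den : Eu n → ℝ := fun w => R ^ 2 - ‖w - y‖ ^ 2 with hden_def
  have hdencont : Continuous den :=
    continuous_const.sub (((continuous_id.sub continuous_const).norm).pow 2)
  have hdenpos : ∀ w : Eu n, ‖w - y‖ < R → 0 < den w := by
    intro w hw
    have := norm_nonneg (w - y)
    simp only [hden_def]
    nlinarith
  set f' : Eu n → ℝ := fun w => (1 + δ) * ℓ (w - y) + ε / den w with hf'_def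
  set g : Eu n → ℝ := fun w => u w - f' w with hg_def
  have hℓcont : Continuous ℓ := ell_continuous hℓ hP hC
  have hℓ0 : ℓ (0 : Eu n) = 0 := ell_zero hℓ hH0
  -- bound for u on the closed ball
  obtain ⟨M, hM⟩ : ∃ M, ∀ w ∈ Metric.closedBall y R, u w ≤ M := by
    obtain ⟨w₀, _, hw₀⟩ := (isCompact_closedBall y R).exists_isMaxOn
      ⟨y, Metric.mem_closedBall_self hR0.le⟩ hu.continuousOn
    exact ⟨u w₀, fun w hw => hw₀ hw⟩
  have huy : u y ≤ M := hM y (Metric.mem_closedBall_self hR0.le)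
  set M₁ : ℝ := M - u y + ε / R ^ 2 with hM₁_def
  have hM₁ : 0 < M₁ := by
    have : 0 < ε / R ^ 2 := by positivity
    simp only [hM₁_def]
    linarith
  have hdeny : den y = R ^ 2 := by simp [hden_def]
  have hgy : g y = u y - ε / R ^ 2 := by
    simp only [hg_def, hf'_def, hdeny]
    rw [sub_self, hℓ0]
    ring
  -- superlevel estimate
  have hkey : ∀ w : Eu n, ‖w - y‖ < R → g y ≤ g w → ‖w - y‖ ^ 2 ≤ R ^ 2 - ε / M₁ := by
    intro w hw hgw
    have hdw := hdenpos w hw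
    have hgw' : u w - (1 + δ) * ℓ (w - y) - ε / den w ≥ u y - ε / R ^ 2 := by
      rw [hgy] at hgw
      simp only [hg_def, hf'_def] at hgw
      linarith
    have hℓn : 0 ≤ ℓ (w - y) := ell_nonneg hH0 hℓ _
    have huw : u w ≤ M := hM w (by
      rw [Metric.mem_closedBall, dist_eq_norm]
      exact hw.le)
    have h1 : ε / den w ≤ M₁ := by
      simp only [hM₁_def]
      nlinarith
    have h2 : ε ≤ M₁ * den w := by
      rw [div_le_iff₀ hdw] at h1
      linarith
    have h3 : ε / M₁ ≤ den w := by
      rw [div_le_iff₀ hM₁]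
      linarith
    simp only [hden_def] at h3
    linarith
  set r2 : ℝ := R ^ 2 - ε / M₁ with hr2_def
  have hr2 : 0 ≤ r2 := by
    have := hkey y (by simpa using hR0) (le_refl _)
    simpa using this
  set rr : ℝ := Real.sqrt r2 with hrr_def
  have hrr2 : rr ^ 2 = r2 := Real.sq_sqrt hr2
  have hrrR : rr < R := by
    have h1 : 0 < ε / M₁ := div_pos hε hM₁
    by_contra hcon
    push_neg at hcon
    have h2 : R ^ 2 ≤ rr ^ 2 := pow_le_pow_left₀ hR0.le hcon 2
    rw [hrr2, hr2_def] at h2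
    linarith
  set A : Set (Eu n) := Metric.closedBall y rr with hA_def
  have hAsub : ∀ w ∈ A, ‖w - y‖ < R := by
    intro w hw
    rw [hA_def, Metric.mem_closedBall, dist_eq_norm] at hw
    linarith
  have memA_iff : ∀ w : Eu n, w ∈ A ↔ ‖w - y‖ ^ 2 ≤ r2 := by
    intro w
    rw [hA_def, Metric.mem_closedBall, dist_eq_norm]
    constructor
    · intro h
      nlinarith [norm_nonneg (w - y), Real.sqrt_nonneg r2]
    · intro h
      nlinarith [norm_nonneg (w - y), Real.sqrt_nonneg r2]
  have hgcontA : ContinuousOn g A := by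
    apply hu.continuousOn.sub
    apply ContinuousOn.add
    · exact (continuous_const.mul (hℓcont.comp (continuous_id.sub continuous_const))).continuousOn
    · exact continuousOn_const.div hdencont.continuousOn
        (fun w hw => (hdenpos w (hAsub w hw)).ne')
  set S : Set (Eu n) := A ∩ g ⁻¹' (Set.Ici (g y)) with hS_def
  have hSclosed : IsClosed S :=
    hgcontA.preimage_isClosed_of_isClosed Metric.isClosed_closedBall isClosed_Ici
  have hScpt : IsCompact S :=
    (isCompact_closedBall y rr).of_isClosed_subset hSclosed Set.inter_subset_left
  have hyS : y ∈ S := by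
    constructor
    · exact Metric.mem_closedBall_self (Real.sqrt_nonneg r2)
    · exact Set.mem_preimage.mpr Set.self_mem_Ici
  obtain ⟨z, hzS, hzmax⟩ := hScpt.exists_isMaxOn ⟨y, hyS⟩ (hgcontA.mono Set.inter_subset_left)
  have hglobal : ∀ w : Eu n, ‖w - y‖ < R → g w ≤ g z := by
    intro w hw
    rcases le_or_gt (g y) (g w) with h | h
    · exact hzmax ⟨(memA_iff w).2 (hkey w hw h), h⟩
    · exact le_trans h.le (hzmax hyS)
  have hzR : ‖z - y‖ < R := hAsub z hzS.1
  by_cases hzy : z = y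
  · -- max at y : direct estimate
    have hx := hglobal x hR
    rw [hzy, hgy] at hx
    simp only [hg_def, hf'_def] at hx
    have h1 : 0 < ε / R ^ 2 := by positivity
    simp only [hden_def] at hx
    linarith
  · -- max at z ≠ y : contradiction with the subsolution property
    exfalso
    set v : Eu n := z - y with hv_def
    have hv : v ≠ 0 := sub_ne_zero.2 hzy
    have hnv : 0 < ‖v‖ := norm_pos_iff.2 hv
    have hℓv : 0 < ℓ v := ell_pos hH hH0 hℓ hv
    set rO : ℝ := min (‖v‖ / 2) ((R - ‖z - y‖) / 2) with hrO_def
    have hrO : 0 < rO := lt_min (by positivity) (by linarith)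
    set χ : ContDiffBump z := ⟨rO / 2, rO, by positivity, by linarith⟩ with hχ_def
    set U : Set (Eu n) := {w | w ≠ y} ∩ {w | ‖w - y‖ < R} with hU_def
    have hUopen : IsOpen U := by
      apply IsOpen.inter isOpen_compl_singleton
      have : Continuous (fun w : Eu n => ‖w - y‖) := (continuous_id.sub continuous_const).norm
      exact isOpen_lt this continuous_const
    have hball_sub : Metric.closedBall z rO ⊆ U := by
      intro w hw
      rw [Metric.mem_closedBall, dist_eq_norm] at hw
      have t1 : ‖z - y‖ ≤ ‖z - w‖ + ‖w - y‖ := by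
        have := norm_sub_le_norm_sub_add_norm_sub z w y
        linarith
      have t2 : ‖z - w‖ = ‖w - z‖ := norm_sub_rev _ _
      have hrO1 : rO ≤ ‖v‖ / 2 := min_le_left _ _
      have hrO2 : rO ≤ (R - ‖z - y‖) / 2 := min_le_right _ _
      constructor
      · intro hwy
        rw [hwy, norm_sub_rev] at hw
        rw [← hv_def] at hw
        have hrO1' : rO ≤ ‖v‖ / 2 := min_le_left _ _
        linarith
      · have t3 : ‖w - y‖ ≤ ‖w - z‖ + ‖z - y‖ := by
          have := norm_sub_le_norm_sub_add_norm_sub w z y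
          linarith
        show ‖w - y‖ < R
        linarith
    -- f' is C¹ on U
    have hsubmap : ContDiff ℝ 1 (fun w : Eu n => w - y) := contDiff_id.sub contDiff_const
    have hf'C1 : ContDiffOn ℝ 1 f' U := by
      apply ContDiffOn.add
      · apply ContDiffOn.mul contDiffOn_const
        apply ContDiffOn.comp (ell_contDiffOn hKcpt hKconv hℓ hP hC hC0) hsubmap.contDiffOn
        intro w hw
        exact sub_ne_zero.2 hw.1
      · apply ContDiffOn.div contDiffOn_const
        · exact (contDiffOn_const.sub (((contDiff_norm_sq ℝ).comp hsubmap).contDiffOn))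
        · intro w hw
          exact (hdenpos w hw.2).ne'
    set φ : Eu n → ℝ := fun w => χ w * f' w with hφ_def
    have hφ : ContDiff ℝ 1 φ := by
      rw [contDiff_iff_contDiffAt]
      intro w
      by_cases hw : w ∈ U
      · exact ((χ.contDiff (n := 1)).contDiffAt).mul
          ((hf'C1 w hw).contDiffAt (hUopen.mem_nhds hw))
      · have hwsupp : w ∉ tsupport (χ : Eu n → ℝ) := by
          rw [χ.tsupport_eq]
          exact fun hmem => hw (hball_sub hmem)
        apply ContDiffAt.congr_of_eventuallyEq (contDiffAt_const (c := (0:ℝ)))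
        filter_upwards [(isOpen_compl_iff.2 (isClosed_tsupport _)).mem_nhds hwsupp] with w' hw'
        simp only [hφ_def]
        rw [image_eq_zero_of_notMem_tsupport hw', zero_mul]
    have hzloc : IsLocalMax (fun w => u w - φ w) z := by
      filter_upwards [Metric.ball_mem_nhds z (by positivity : (0:ℝ) < rO / 2)] with w hw
      rw [Metric.mem_ball, dist_eq_norm] at hw
      have hχw : χ w = 1 := χ.one_of_mem_closedBall (by
        rw [Metric.mem_closedBall, dist_eq_norm]
        exact hw.le)
      have hχz : χ z = 1 := χ.one_of_mem_closedBall
        (Metric.mem_closedBall_self (by positivity))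
      have hwB : ‖w - y‖ < R := by
        have t3 : ‖w - y‖ ≤ ‖w - z‖ + ‖z - y‖ := by
          have := norm_sub_le_norm_sub_add_norm_sub w z y
          linarith
        have hrO2 : rO ≤ (R - ‖z - y‖) / 2 := min_le_right _ _
        linarith
      have h1 : g w ≤ g z := hglobal w hwB
      simp only [hg_def] at h1
      simp only [hφ_def, hχw, hχz, one_mul]
      exact h1
    have hHgrad := hsub φ hφ z hzloc
    have hinner : ⟪gradient φ z, v⟫ ≤ ℓ v := ell_le hℓ hHgrad
    have hgr : ⟪gradient φ z, v⟫ = fderiv ℝ φ z v := InnerProductSpace.toDual_symm_apply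
    -- derivative along the ray through y and z
    have hφdiff : DifferentiableAt ℝ φ z := (hφ.differentiable one_ne_zero).differentiableAt
    have hline : HasDerivAt (fun t : ℝ => z + t • v) v 0 := by
      simpa using ((hasDerivAt_id (0:ℝ)).smul_const v).const_add z
    have hd1 : HasDerivAt (fun t : ℝ => φ (z + t • v)) (fderiv ℝ φ z v) 0 := by
      have hx : z + (0:ℝ) • v = z := by simp
      have h := HasFDerivAt.comp_hasDerivAt (x := (0:ℝ)) (f := fun t : ℝ => z + t • v)
        (hx ▸ hφdiff.hasFDerivAt) hline
      rw [hx] at h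
      exact h
    -- the explicit one-variable function
    set γ : ℝ → ℝ := fun t => (1 + δ) * ((1 + t) * ℓ v) +
      ε * (R ^ 2 - (1 + t) ^ 2 * ‖v‖ ^ 2)⁻¹ with hγ_def
    have hden0 : (0:ℝ) < R ^ 2 - ‖v‖ ^ 2 := by
      have := hdenpos z hzR
      simpa [hden_def, hv_def] using this
    have h1d : HasDerivAt (fun t : ℝ => 1 + t) 1 0 := by
      simpa using (hasDerivAt_id (0:ℝ)).const_add 1
    have hterm1 : HasDerivAt (fun t : ℝ => (1 + δ) * ((1 + t) * ℓ v))
        ((1 + δ) * (1 * ℓ v)) 0 := (h1d.mul_const (ℓ v)).const_mul (1 + δ)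
    have hpow : HasDerivAt (fun t : ℝ => (1 + t) ^ 2) ((2:ℕ) * (1 + (0:ℝ)) ^ 1 * 1) 0 :=
      h1d.pow 2
    have hden2 : HasDerivAt (fun t : ℝ => R ^ 2 - (1 + t) ^ 2 * ‖v‖ ^ 2)
        (-(((2:ℕ) * (1 + (0:ℝ)) ^ 1 * 1) * ‖v‖ ^ 2)) 0 := (hpow.mul_const _).const_sub _
    have hne0 : R ^ 2 - (1 + (0:ℝ)) ^ 2 * ‖v‖ ^ 2 ≠ 0 := by
      simp only [add_zero, one_pow, one_mul]
      linarith
    have hinv := (hden2.inv hne0).const_mul ε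
    have hd2 : HasDerivAt γ
        ((1 + δ) * (1 * ℓ v) + ε * (-(-(((2:ℕ) * (1 + (0:ℝ)) ^ 1 * 1) * ‖v‖ ^ 2)) /
          (R ^ 2 - (1 + (0:ℝ)) ^ 2 * ‖v‖ ^ 2) ^ 2)) 0 := hterm1.add hinv
    -- φ along the line agrees with γ near 0
    have ht0 : (0:ℝ) < min ((rO / 2) / ‖v‖) (1 / 2) := lt_min (by positivity) (by norm_num)
    have heq : (fun t : ℝ => φ (z + t • v)) =ᶠ[nhds (0:ℝ)] γ := by
      filter_upwards [Metric.ball_mem_nhds (0:ℝ) ht0] with t ht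
      rw [Metric.mem_ball, Real.dist_eq, sub_zero] at ht
      have ht1 : |t| < (rO / 2) / ‖v‖ := lt_of_lt_of_le ht (min_le_left _ _)
      have ht2 : |t| < 1 / 2 := lt_of_lt_of_le ht (min_le_right _ _)
      have htpos : 0 < 1 + t := by
        rcases abs_lt.1 ht2 with ⟨h, _⟩
        linarith
      have hwball : z + t • v ∈ Metric.closedBall z (rO / 2) := by
        rw [Metric.mem_closedBall, dist_eq_norm]
        simp only [add_sub_cancel_left]
        rw [norm_smul, Real.norm_eq_abs]
        calc |t| * ‖v‖ ≤ ((rO / 2) / ‖v‖) * ‖v‖ :=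
              mul_le_mul_of_nonneg_right ht1.le (norm_nonneg _)
          _ = rO / 2 := div_mul_cancel₀ _ hnv.ne'
      have hχ1 : χ (z + t • v) = 1 := χ.one_of_mem_closedBall hwball
      have hsub1 : z + t • v - y = (1 + t) • v := by
        rw [add_smul, one_smul, hv_def]
        abel
      have hnorm : ‖(1 + t) • v‖ ^ 2 = (1 + t) ^ 2 * ‖v‖ ^ 2 := by
        rw [norm_smul, Real.norm_eq_abs, mul_pow, sq_abs]
      simp only [hφ_def, hχ1, one_mul, hf'_def, hγ_def, hden_def, hsub1, hnorm,
        ell_smul hℓ htpos, div_eq_mul_inv]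
    have hd1' : HasDerivAt γ (fderiv ℝ φ z v) 0 := hd1.congr_of_eventuallyEq heq.symm
    have hDeq := hd1'.unique hd2
    rw [hDeq] at hgr
    have hpos2 : 0 < ε * (2 * ‖v‖ ^ 2) / (R ^ 2 - ‖v‖ ^ 2) ^ 2 := by positivity
    have hfinal : ℓ v < (1 + δ) * (1 * ℓ v) + ε * (-(-(((2:ℕ) * (1 + (0:ℝ)) ^ 1 * 1) * ‖v‖ ^ 2)) /
          (R ^ 2 - (1 + (0:ℝ)) ^ 2 * ‖v‖ ^ 2) ^ 2) := by
      have he : ε * (-(-(((2:ℕ) * (1 + (0:ℝ)) ^ 1 * 1) * ‖v‖ ^ 2)) /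
          (R ^ 2 - (1 + (0:ℝ)) ^ 2 * ‖v‖ ^ 2) ^ 2) = ε * (2 * ‖v‖ ^ 2) / (R ^ 2 - ‖v‖ ^ 2) ^ 2 := by
        norm_num
        ring
      rw [he]
      nlinarith
    rw [hgr] at hinner
    linarith

end P

/-- A continuous `u : ℝⁿ → ℝ` is a viscosity subsolution of `H(Du) = 0`
on `ℝⁿ` if and only if `u x - u y ≤ ℓ (x - y)` for all `x, y`, where `ℓ` is the support
function of the compact strictly convex set `K = {p | H p ≤ 0}`. -/
theorem subsolution_iff_ell_lipschitz
    {n : ℕ} (hn : 0 < n)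
    (H ℓ : EuclideanSpace ℝ (Fin n) → ℝ)
    (hH : Continuous H) (hH0 : H 0 < 0)
    (hKcpt : IsCompact {p : EuclideanSpace ℝ (Fin n) | H p ≤ 0})
    (hKconv : StrictConvex ℝ {p : EuclideanSpace ℝ (Fin n) | H p ≤ 0})
    (hℓ : ∀ v, IsGreatest {r : ℝ | ∃ p, H p ≤ 0 ∧ ⟪p, v⟫ = r} (ℓ v))
    (u : EuclideanSpace ℝ (Fin n) → ℝ) (hu : Continuous u) :
    (∀ φ : EuclideanSpace ℝ (Fin n) → ℝ, ContDiff ℝ 1 φ →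
        ∀ x₀, IsLocalMax (fun x => u x - φ x) x₀ → H (gradient φ x₀) ≤ 0)
      ↔ ∀ x y, u x - u y ≤ ℓ (x - y) := by
  constructor
  · intro hsub x y
    by_cases hxy : x = y
    · subst hxy
      simp [sub_self, ell_zero hℓ hH0]
    · obtain ⟨C, hC0, hC⟩ := K_bound hKcpt
      have hP : ∀ v, H (Classical.choose (hℓ v).1) ≤ 0 ∧
          ⟪Classical.choose (hℓ v).1, v⟫ = ℓ v := fun v => Classical.choose_spec (hℓ v).1
      set R : ℝ := ‖x - y‖ + 1 with hR_def
      have hR : ‖x - y‖ < R := by rw [hR_def]; linarith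
      have hc : 0 < R ^ 2 - ‖x - y‖ ^ 2 := by
        have h0 := norm_nonneg (x - y)
        rw [hR_def]
        nlinarith
      have claim : ∀ δ > 0, ∀ ε > 0,
          u x - u y ≤ (1 + δ) * ℓ (x - y) + ε / (R ^ 2 - ‖x - y‖ ^ 2) :=
        fun δ hδ ε hε => key_claim hH hH0 hKcpt hKconv hℓ hP hC hC0 hu hsub hR hδ hε
      have h1 : ∀ δ > 0, u x - u y ≤ (1 + δ) * ℓ (x - y) := by
        intro δ hδ
        by_contra hcon
        push_neg at hcon
        set a := u x - u y - (1 + δ) * ℓ (x - y) with ha_def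
        have ha : 0 < a := by rw [ha_def]; linarith
        have h2 := claim δ hδ (a * (R ^ 2 - ‖x - y‖ ^ 2) / 2) (by positivity)
        have h3 : a * (R ^ 2 - ‖x - y‖ ^ 2) / 2 / (R ^ 2 - ‖x - y‖ ^ 2) = a / 2 := by
          rw [div_div, div_eq_div_iff (by positivity) (by norm_num : (2:ℝ) ≠ 0)]
          ring
        rw [h3] at h2
        rw [ha_def] at ha
        linarith
      by_contra hcon
      push_neg at hcon
      have hl : 0 < ℓ (x - y) := ell_pos hH hH0 hℓ (sub_ne_zero.2 hxy)
      have hb : 0 < u x - u y - ℓ (x - y) := by linarith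
      set b := u x - u y - ℓ (x - y) with hb_def
      have h4 := h1 (b / (2 * ℓ (x - y))) (by positivity)
      have h5 : (1 + b / (2 * ℓ (x - y))) * ℓ (x - y) = ℓ (x - y) + b / 2 := by
        field_simp
      rw [h5] at h4
      rw [hb_def] at hb
      linarith
  · intro hLip φ hφ x₀ hmax
    have hdiff : DifferentiableAt ℝ φ x₀ := (hφ.differentiable one_ne_zero).differentiableAt
    apply mem_K_of_inner_le hKcpt hKconv hℓ
    intro v
    have hgr : ⟪gradient φ x₀, v⟫ = fderiv ℝ φ x₀ v := InnerProductSpace.toDual_symm_apply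
    rw [hgr]
    have hline : HasDerivAt (fun t : ℝ => x₀ + t • v) v 0 := by
      simpa using ((hasDerivAt_id (0:ℝ)).smul_const v).const_add x₀
    have hd : HasDerivAt (fun t : ℝ => φ (x₀ + t • v)) (fderiv ℝ φ x₀ v) 0 := by
      have hx : x₀ + (0:ℝ) • v = x₀ := by simp
      have h := HasFDerivAt.comp_hasDerivAt (x := (0:ℝ)) (f := fun t : ℝ => x₀ + t • v)
        (hx ▸ hdiff.hasFDerivAt) hline
      rw [hx] at h
      exact h
    have hslope := hasDerivAt_iff_tendsto_slope.1 hd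
    have hmono : nhdsWithin (0:ℝ) (Set.Iio 0) ≤ nhdsWithin (0:ℝ) ({0}ᶜ) :=
      nhdsWithin_mono 0 (fun t ht => ne_of_lt ht)
    have hslope' := hslope.mono_left hmono
    refine le_of_tendsto hslope' ?_
    have hcont : Filter.Tendsto (fun t : ℝ => x₀ + t • v) (nhds 0) (nhds x₀) := by
      have := hline.continuousAt
      rw [ContinuousAt] at this
      simpa using this
    have h2 : ∀ᶠ t in nhds (0:ℝ),
        u (x₀ + t • v) - φ (x₀ + t • v) ≤ u x₀ - φ x₀ := hcont.eventually hmax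
    filter_upwards [h2.filter_mono nhdsWithin_le_nhds, self_mem_nhdsWithin] with t ht htneg
    have htneg' : t < 0 := htneg
    have hL : u x₀ - u (x₀ + t • v) ≤ ℓ (x₀ - (x₀ + t • v)) := hLip _ _
    have hsm : x₀ - (x₀ + t • v) = (-t) • v := by
      rw [neg_smul]
      abel
    rw [hsm, ell_smul hℓ (by linarith : (0:ℝ) < -t)] at hL
    have key : t * ℓ v ≤ φ (x₀ + t • v) - φ x₀ := by linarith
    have : slope (fun t : ℝ => φ (x₀ + t • v)) 0 t
        = (φ (x₀ + t • v) - φ (x₀ + (0:ℝ) • v)) / (t - 0) := slope_def_field _ _ _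
    rw [this]
    simp only [zero_smul, add_zero, sub_zero]
    rw [div_le_iff_of_neg htneg']
    linarith
end

section
/- The support function ℓ satisfies: (a) ℓ is a viscosity subsolution of H(Dℓ) = 0 on ℝⁿ (for every C¹ function φ and every local maximum point x₀ of ℓ − φ one has H(Dφ(x₀)) ≤ 0); and (b) at every point x ∈ ℝⁿ at which ℓ is differentiable, ℓ(x) = Dℓ(x)·x and H(Dℓ(x)) = 0, where Dℓ(x) denotes the gradient of ℓ at x. -/
open scoped RealInnerProductSpace
open Filter InnerProductSpace

lemma key_grad {n : ℕ} {ℓ φ : EuclideanSpace ℝ (Fin n) → ℝ}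
    {p x : EuclideanSpace ℝ (Fin n)}
    (hub : ∀ y, ⟪p, y⟫ ≤ ℓ y) (hpx : ⟪p, x⟫ = ℓ x)
    (hφ : DifferentiableAt ℝ φ x)
    (hmax : IsLocalMax (fun y => ℓ y - φ y) x) :
    gradient φ x = p := by
  have hF : IsLocalMax (fun y => ⟪p, y⟫ - φ y) x := by
    filter_upwards [hmax] with y hy
    show ⟪p, y⟫ - φ y ≤ ⟪p, x⟫ - φ x
    have h1 := hub y
    have h2 : ℓ y - φ y ≤ ℓ x - φ x := hy
    linarith
  have hdi : DifferentiableAt ℝ (fun y : EuclideanSpace ℝ (Fin n) => ⟪p, y⟫) x :=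
    (innerSL ℝ p).differentiableAt
  have h0 : fderiv ℝ (fun y => ⟪p, y⟫ - φ y) x = 0 := hF.fderiv_eq_zero
  rw [fderiv_fun_sub hdi hφ] at h0
  have hfi : fderiv ℝ (fun y : EuclideanSpace ℝ (Fin n) => ⟪p, y⟫) x = innerSL ℝ p :=
    (innerSL ℝ p).fderiv
  have hφd : fderiv ℝ φ x = innerSL ℝ p := by
    rw [hfi] at h0
    exact (sub_eq_zero.mp h0).symm
  have hdual : (toDual ℝ (EuclideanSpace ℝ (Fin n))) p = innerSL ℝ p := by
    ext v; simp [toDual_apply_apply]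
  rw [gradient, hφd, ← hdual, LinearIsometryEquiv.symm_apply_apply]

/-- The support function `ℓ` of `K = {p | H p ≤ 0}` is (a) a viscosity
subsolution of `H(Dℓ) = 0` on `ℝⁿ`, and (b) at every point `x` where `ℓ` is differentiable,
`ℓ x = ⟪Dℓ(x), x⟫` and `H (Dℓ x) = 0`. -/
theorem support_function_subsolution_and_eikonal
    {n : ℕ} (hn : 0 < n)
    (H ℓ : EuclideanSpace ℝ (Fin n) → ℝ)
    (hH : Continuous H) (hH0 : H 0 < 0)
    (hKcpt : IsCompact {p : EuclideanSpace ℝ (Fin n) | H p ≤ 0})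
    (hKconv : StrictConvex ℝ {p : EuclideanSpace ℝ (Fin n) | H p ≤ 0})
    (hℓ : ∀ v, IsGreatest {r : ℝ | ∃ p, H p ≤ 0 ∧ ⟪p, v⟫ = r} (ℓ v)) :
    (∀ φ : EuclideanSpace ℝ (Fin n) → ℝ, ContDiff ℝ 1 φ →
        ∀ x₀, IsLocalMax (fun x => ℓ x - φ x) x₀ → H (gradient φ x₀) ≤ 0)
      ∧ ∀ x, DifferentiableAt ℝ ℓ x →
          ℓ x = ⟪gradient ℓ x, x⟫ ∧ H (gradient ℓ x) = 0 := by
  have hub : ∀ p, H p ≤ 0 → ∀ y, ⟪p, y⟫ ≤ ℓ y := fun p hp y => (hℓ y).2 ⟨p, hp, rfl⟩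
  constructor
  · intro φ hφ x₀ hmax
    obtain ⟨p, hp, hpx⟩ := (hℓ x₀).1
    have := key_grad (hub p hp) hpx (hφ.differentiable one_ne_zero).differentiableAt hmax
    rw [this]; exact hp
  · intro x hx
    have hmax : IsLocalMax (fun y => ℓ y - ℓ y) x :=
      Filter.Eventually.of_forall fun y => by simp
    obtain ⟨p, hp, hpx⟩ := (hℓ x).1
    have hgrad : gradient ℓ x = p := key_grad (hub p hp) hpx hx hmax
    rcases eq_or_ne x 0 with hx0 | hx0
    · -- x = 0: two distinct maximizers give a contradiction
      exfalso
      subst hx0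
      have hℓ0 : ℓ 0 = 0 := by
        obtain ⟨q, _, hq⟩ := (hℓ 0).1
        rw [← hq, inner_zero_right]
      -- small ball around 0 inside K
      have hopen : IsOpen (H ⁻¹' Set.Iio 0) := isOpen_Iio.preimage hH
      obtain ⟨δ, hδ, hball⟩ := Metric.isOpen_iff.mp hopen 0 hH0
      set u : EuclideanSpace ℝ (Fin n) := EuclideanSpace.single ⟨0, hn⟩ (δ/2) with hu
      have hun : ‖u‖ = δ/2 := by
        rw [hu, EuclideanSpace.norm_single, Real.norm_of_nonneg (by linarith)]
      have huK : H u ≤ 0 := by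
        have : u ∈ Metric.ball (0 : EuclideanSpace ℝ (Fin n)) δ := by
          rw [Metric.mem_ball, dist_zero_right, hun]; linarith
        exact le_of_lt (hball this)
      have h1 : gradient ℓ 0 = (0 : EuclideanSpace ℝ (Fin n)) :=
        key_grad (hub 0 hH0.le) (by simp [hℓ0]) hx hmax
      have h2 : gradient ℓ 0 = u :=
        key_grad (hub u huK) (by simp [hℓ0]) hx hmax
      have : u ≠ 0 := by
        intro h
        have := congrArg (fun f => f ⟨0, hn⟩) h
        simp [hu] at this
        linarith
      exact this (h2.symm.trans h1)
    · refine ⟨by rw [hgrad, hpx], ?_⟩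
      rw [hgrad]
      by_contra hne
      have hplt : H p < 0 := lt_of_le_of_ne hp hne
      have hopen : IsOpen (H ⁻¹' Set.Iio 0) := isOpen_Iio.preimage hH
      obtain ⟨δ, hδ, hball⟩ := Metric.isOpen_iff.mp hopen p hplt
      have hxn : (0:ℝ) < ‖x‖ := norm_pos_iff.mpr hx0
      set c : ℝ := δ / (2 * ‖x‖) with hc
      have hcpos : 0 < c := div_pos hδ (by positivity)
      set q := p + c • x with hq
      have hqK : H q ≤ 0 := by
        have : q ∈ Metric.ball p δ := by
          rw [Metric.mem_ball, dist_eq_norm, hq]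
          simp only [add_sub_cancel_left]
          have hcx : c * ‖x‖ = δ / 2 := by
            rw [hc]; field_simp
          rw [norm_smul, Real.norm_of_nonneg hcpos.le, hcx]
          linarith
        exact le_of_lt (hball this)
      have hle : ⟪q, x⟫ ≤ ℓ x := hub q hqK x
      have : ⟪q, x⟫ = ℓ x + c * ‖x‖^2 := by
        rw [hq, inner_add_left, real_inner_smul_left, hpx, real_inner_self_eq_norm_sq]
      have hpos : 0 < c * ‖x‖^2 := by positivity
      linarith
end

section
/- Let v(x) := inf_{y∈ℝⁿ} { |y|²/2 + ℓ(x − y) }. Then v(x) = |x|²/2 for every x ∈ ℝⁿ with H(x) ≤ 0, and v(x) < |x|²/2 for every x with H(x) > 0; consequently v is a viscosity solution of H(Dv) = 0 on the open set {x ∈ ℝⁿ : H(x) > 0}. -/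
open scoped RealInnerProductSpace
open Filter

/-- For `v x = inf_y (|y|²/2 + ℓ (x - y))`, one has `v x = |x|²/2`
whenever `H x ≤ 0`, `v x < |x|²/2` whenever `H x > 0`, and `v` is a viscosity solution of
`H(Dv) = 0` on the open set `{x | H x > 0}`. -/
theorem inf_convolution_of_half_norm_sq
    {n : ℕ} (hn : 0 < n)
    (H ℓ : EuclideanSpace ℝ (Fin n) → ℝ)
    (hH : Continuous H) (hH0 : H 0 < 0)
    (hKcpt : IsCompact {p : EuclideanSpace ℝ (Fin n) | H p ≤ 0})
    (hKconv : StrictConvex ℝ {p : EuclideanSpace ℝ (Fin n) | H p ≤ 0})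
    (hℓ : ∀ v, IsGreatest {r : ℝ | ∃ p, H p ≤ 0 ∧ ⟪p, v⟫ = r} (ℓ v))
    (v : EuclideanSpace ℝ (Fin n) → ℝ)
    (hv : ∀ x, v x = sInf (Set.range fun y => ‖y‖ ^ 2 / 2 + ℓ (x - y))) :
    (∀ x, H x ≤ 0 → v x = ‖x‖ ^ 2 / 2) ∧
    (∀ x, 0 < H x → v x < ‖x‖ ^ 2 / 2) ∧
    (∀ φ : EuclideanSpace ℝ (Fin n) → ℝ, ContDiff ℝ 1 φ →
      ∀ x₀, 0 < H x₀ → IsLocalMax (fun x => v x - φ x) x₀ → H (gradient φ x₀) ≤ 0) ∧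
    (∀ φ : EuclideanSpace ℝ (Fin n) → ℝ, ContDiff ℝ 1 φ →
      ∀ x₀, 0 < H x₀ → IsLocalMin (fun x => v x - φ x) x₀ → 0 ≤ H (gradient φ x₀)) := by
  classical
  have hK0 : H (0 : EuclideanSpace ℝ (Fin n)) ≤ 0 := le_of_lt hH0
  have hconv : Convex ℝ {p : EuclideanSpace ℝ (Fin n) | H p ≤ 0} := hKconv.convex
  have hcomplete : IsComplete {p : EuclideanSpace ℝ (Fin n) | H p ≤ 0} :=
    hKcpt.isClosed.isComplete
  have hub : ∀ (w p : EuclideanSpace ℝ (Fin n)), H p ≤ 0 → ⟪p, w⟫ ≤ ℓ w :=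
    fun w p hp => (hℓ w).2 ⟨p, hp, rfl⟩
  -- lower bound on each term of the infimum
  have hlow : ∀ (q : EuclideanSpace ℝ (Fin n)), H q ≤ 0 →
      ∀ x y : EuclideanSpace ℝ (Fin n), ⟪q, x⟫ - ‖q‖ ^ 2 / 2 ≤ ‖y‖ ^ 2 / 2 + ℓ (x - y) := by
    intro q hq x y
    have h1 := hub (x - y) q hq
    have h2 : ⟪q, x - y⟫ = ⟪q, x⟫ - ⟪q, y⟫ := inner_sub_right _ _ _
    have h3 : ‖y - q‖ ^ 2 = ‖y‖ ^ 2 - 2 * ⟪y, q⟫ + ‖q‖ ^ 2 := norm_sub_sq_real y q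
    have h4 : (0:ℝ) ≤ ‖y - q‖ ^ 2 := sq_nonneg _
    have h5 : ⟪y, q⟫ = ⟪q, y⟫ := real_inner_comm q y
    linarith
  have hbdd : ∀ x : EuclideanSpace ℝ (Fin n),
      BddBelow (Set.range fun y => ‖y‖ ^ 2 / 2 + ℓ (x - y)) := by
    intro x
    refine ⟨⟪(0 : EuclideanSpace ℝ (Fin n)), x⟫ - ‖(0 : EuclideanSpace ℝ (Fin n))‖ ^ 2 / 2, ?_⟩
    rintro r ⟨y, rfl⟩
    exact hlow 0 hK0 x y
  have hlowv : ∀ (q : EuclideanSpace ℝ (Fin n)), H q ≤ 0 →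
      ∀ x, ⟪q, x⟫ - ‖q‖ ^ 2 / 2 ≤ v x := by
    intro q hq x
    rw [hv x]
    refine le_csInf ⟨_, ⟨x, rfl⟩⟩ ?_
    rintro r ⟨y, rfl⟩
    exact hlow q hq x y
  -- projection onto K
  have hproj : ∀ x : EuclideanSpace ℝ (Fin n), ∃ p, H p ≤ 0 ∧
      ∀ q, H q ≤ 0 → ⟪x - p, q - p⟫ ≤ 0 := by
    intro x
    obtain ⟨p, hp, hmin⟩ := exists_norm_eq_iInf_of_complete_convex (K := {p : EuclideanSpace ℝ (Fin n) | H p ≤ 0}) ⟨0, hK0⟩ hcomplete hconv x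
    rw [norm_eq_iInf_iff_real_inner_le_zero hconv hp] at hmin
    exact ⟨p, hp, fun q hq => hmin q hq⟩
  -- formula for v at a projection point
  have hform : ∀ x p : EuclideanSpace ℝ (Fin n), H p ≤ 0 →
      (∀ q, H q ≤ 0 → ⟪x - p, q - p⟫ ≤ 0) → v x = ⟪p, x⟫ - ‖p‖ ^ 2 / 2 := by
    intro x p hp hchar
    refine le_antisymm ?_ (hlowv p hp x)
    have h1 : v x ≤ ‖p‖ ^ 2 / 2 + ℓ (x - p) := by
      rw [hv x]; exact csInf_le (hbdd x) ⟨p, rfl⟩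
    obtain ⟨q, hq, hqe⟩ := (hℓ (x - p)).1
    have h2 : ⟪q - p, x - p⟫ ≤ 0 := by
      rw [real_inner_comm]; exact hchar q hq
    have h3 : ⟪q, x - p⟫ - ⟪p, x - p⟫ = ⟪q - p, x - p⟫ := (inner_sub_left _ _ _).symm
    have h4 : ⟪p, x - p⟫ = ⟪p, x⟫ - ⟪p, p⟫ := inner_sub_right _ _ _
    have h5 : ⟪p, p⟫ = ‖p‖ ^ 2 := real_inner_self_eq_norm_sq p
    linarith
  -- Part 1
  have part1 : ∀ x, H x ≤ 0 → v x = ‖x‖ ^ 2 / 2 := by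
    intro x hx
    have h1 : v x ≤ ‖x‖ ^ 2 / 2 + ℓ (x - x) := by
      rw [hv x]; exact csInf_le (hbdd x) ⟨x, rfl⟩
    have h2 : ℓ (x - x) = 0 := by
      obtain ⟨q, hq, hqe⟩ := (hℓ (x - x)).1
      rw [← hqe, sub_self, inner_zero_right]
    have h3 := hlowv x hx x
    have h4 : ⟪x, x⟫ = ‖x‖ ^ 2 := real_inner_self_eq_norm_sq x
    linarith
  -- Part 2
  have part2 : ∀ x, 0 < H x → v x < ‖x‖ ^ 2 / 2 := by
    intro x hx
    obtain ⟨p, hp, hchar⟩ := hproj x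
    have hval := hform x p hp hchar
    have hne : x ≠ p := by intro h; rw [h] at hx; linarith
    have hxp : 0 < ‖x - p‖ ^ 2 := pow_pos (norm_pos_iff.2 (sub_ne_zero.2 hne)) 2
    have hns : ‖x - p‖ ^ 2 = ‖x‖ ^ 2 - 2 * ⟪x, p⟫ + ‖p‖ ^ 2 := norm_sub_sq_real x p
    have hc : ⟪p, x⟫ = ⟪x, p⟫ := real_inner_comm x p
    linarith
  -- Parts 3 and 4
  have key : ∀ φ : EuclideanSpace ℝ (Fin n) → ℝ, ContDiff ℝ 1 φ →
      ∀ x₀, 0 < H x₀ →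
      (IsLocalMax (fun x => v x - φ x) x₀ ∨ IsLocalMin (fun x => v x - φ x) x₀) →
      H (gradient φ x₀) = 0 := by
    intro φ hφ x₀ hx₀ hext
    obtain ⟨p₀, hp₀, hchar₀⟩ := hproj x₀
    have hvx₀ := hform x₀ p₀ hp₀ hchar₀
    -- two-sided error bound, hence differentiability of v at x₀ with gradient p₀
    have hElb : ∀ x, 0 ≤ v x - v x₀ - ⟪p₀, x - x₀⟫ := by
      intro x
      have h1 := hlowv p₀ hp₀ x
      have h2 : ⟪p₀, x - x₀⟫ = ⟪p₀, x⟫ - ⟪p₀, x₀⟫ := inner_sub_right _ _ _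
      linarith
    have hEub : ∀ x, v x - v x₀ - ⟪p₀, x - x₀⟫ ≤ ‖x - x₀‖ ^ 2 := by
      intro x
      obtain ⟨p, hp, hchar⟩ := hproj x
      have hvx := hform x p hp hchar
      have hv0 := hlowv p hp x₀
      have hA : ⟪x - p, p₀ - p⟫ ≤ 0 := hchar p₀ hp₀
      have hB : ⟪x₀ - p₀, p - p₀⟫ ≤ 0 := hchar₀ p hp
      have e1 : ⟪x - x₀, p - p₀⟫
          = ⟪x - p, p - p₀⟫ + ⟪p - p₀, p - p₀⟫ + ⟪p₀ - x₀, p - p₀⟫ := by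
        rw [← inner_add_left, ← inner_add_left]
        congr 1
        abel
      have e2 : ⟪x - p, p - p₀⟫ = -⟪x - p, p₀ - p⟫ := by
        rw [← inner_neg_right]
        congr 1
        abel
      have e3 : ⟪p₀ - x₀, p - p₀⟫ = -⟪x₀ - p₀, p - p₀⟫ := by
        rw [← inner_neg_left]
        congr 1
        abel
      have e4 : ⟪p - p₀, p - p₀⟫ = ‖p - p₀‖ ^ 2 := real_inner_self_eq_norm_sq _
      have hkey : ‖p - p₀‖ ^ 2 ≤ ⟪x - x₀, p - p₀⟫ := by linarith
      have cs : ⟪x - x₀, p - p₀⟫ ≤ ‖x - x₀‖ * ‖p - p₀‖ := real_inner_le_norm _ _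
      have hquad : ⟪x - x₀, p - p₀⟫ ≤ ‖x - x₀‖ ^ 2 := by
        nlinarith [sq_nonneg (‖x - x₀‖ - ‖p - p₀‖), norm_nonneg (x - x₀), norm_nonneg (p - p₀)]
      have h6 : ⟪p, x⟫ - ⟪p, x₀⟫ = ⟪p, x - x₀⟫ := (inner_sub_right _ _ _).symm
      have h7 : ⟪p, x - x₀⟫ - ⟪p₀, x - x₀⟫ = ⟪p - p₀, x - x₀⟫ := (inner_sub_left _ _ _).symm
      have h8 : ⟪p - p₀, x - x₀⟫ = ⟪x - x₀, p - p₀⟫ := real_inner_comm _ _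
      linarith
    have hgrad : HasGradientAt v p₀ x₀ := by
      rw [hasGradientAt_iff_isLittleO, Asymptotics.isLittleO_iff]
      intro c hc
      have hball : ∀ᶠ x in nhds x₀, ‖x - x₀‖ < c := by
        filter_upwards [Metric.ball_mem_nhds x₀ hc] with x hx
        rwa [Metric.mem_ball, dist_eq_norm] at hx
      filter_upwards [hball] with x hx
      have h1 := hEub x
      have h2 := hElb x
      rw [Real.norm_eq_abs, abs_of_nonneg h2]
      have h3 : ‖x - x₀‖ ^ 2 ≤ c * ‖x - x₀‖ := by nlinarith [norm_nonneg (x - x₀)]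
      linarith
    -- identify the gradient of φ at x₀ with p₀
    have hφd : DifferentiableAt ℝ φ x₀ := (hφ.differentiable one_ne_zero).differentiableAt
    have hφg : HasGradientAt φ (gradient φ x₀) x₀ := hφd.hasGradientAt
    have hsub : HasFDerivAt (fun x => v x - φ x)
        ((InnerProductSpace.toDual ℝ (EuclideanSpace ℝ (Fin n))) (p₀ - gradient φ x₀)) x₀ := by
      have h1 := hasGradientAt_iff_hasFDerivAt.1 hgrad
      have h2 := hasGradientAt_iff_hasFDerivAt.1 hφg
      rw [map_sub]
      exact h1.sub h2
    have hzero : (InnerProductSpace.toDual ℝ (EuclideanSpace ℝ (Fin n)))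
        (p₀ - gradient φ x₀) = 0 := by
      rcases hext with hmax | hmin
      · exact hmax.hasFDerivAt_eq_zero hsub
      · exact hmin.hasFDerivAt_eq_zero hsub
    have hpg : p₀ = gradient φ x₀ := by
      have h := (LinearIsometryEquiv.map_eq_zero_iff _).1 hzero
      rwa [sub_eq_zero] at h
    rw [← hpg]
    -- H p₀ = 0
    refine le_antisymm hp₀ (le_of_not_gt ?_)
    intro hneg
    have hT : Filter.Tendsto (fun t : ℝ => H (p₀ + t • (x₀ - p₀))) (nhds 0) (nhds (H p₀)) := by
      have hc : Continuous (fun t : ℝ => H (p₀ + t • (x₀ - p₀))) := by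
        exact hH.comp (continuous_const.add (continuous_id.smul continuous_const))
      simpa using hc.tendsto 0
    have hev : ∀ᶠ t in nhds (0 : ℝ), H (p₀ + t • (x₀ - p₀)) < 0 :=
      hT.eventually_lt_const hneg
    rw [Metric.eventually_nhds_iff] at hev
    obtain ⟨ε, hε, hball⟩ := hev
    have ht : (0 : ℝ) < ε / 2 := by positivity
    have hq : H (p₀ + (ε / 2) • (x₀ - p₀)) < 0 := by
      apply hball
      rw [Real.dist_eq, sub_zero, abs_of_pos ht]
      linarith
    have hpi := hchar₀ (p₀ + (ε / 2) • (x₀ - p₀)) (le_of_lt hq)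
    have hsimp : (p₀ + (ε / 2) • (x₀ - p₀)) - p₀ = (ε / 2) • (x₀ - p₀) := by abel
    rw [hsimp, real_inner_smul_right, real_inner_self_eq_norm_sq] at hpi
    have hne : x₀ ≠ p₀ := by intro h; rw [h] at hx₀; linarith
    have hpos : 0 < ‖x₀ - p₀‖ ^ 2 := pow_pos (norm_pos_iff.2 (sub_ne_zero.2 hne)) 2
    exact absurd hpi (not_le.2 (mul_pos ht hpos))
  refine ⟨part1, part2, ?_, ?_⟩
  · intro φ hφ x₀ h hmax
    rw [key φ hφ x₀ h (Or.inl hmax)]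
  · intro φ hφ x₀ h hmin
    rw [key φ hφ x₀ h (Or.inr hmin)]
end

section
/- Assume n = 1, that F is uniformly elliptic (θ > 0), and that H satisfies the uniform convexity condition. If u₁, u₂ : ℝ → ℝ are convex continuous viscosity solutions of max{λ* + F(u'') − f(x), H(u')} = 0 on ℝ, both satisfying u(x)/ℓ(x) → 1 as |x| → ∞, then u₁ − u₂ is a constant function. -/
open Filter

/-- `u` is a viscosity subsolution of `max {lam + F(u'') - f, H(u')} = 0` on `ℝ`. -/
def IsSubsolutionEig1D (F H f : ℝ → ℝ) (lam : ℝ) (u : ℝ → ℝ) : Prop :=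
  ∀ φ : ℝ → ℝ, ContDiff ℝ 2 φ →
    ∀ x₀, IsLocalMax (fun x => u x - φ x) x₀ →
      max (lam + F (deriv (deriv φ) x₀) - f x₀) (H (deriv φ x₀)) ≤ 0

/-- `v` is a viscosity supersolution of `max {lam + F(v'') - f, H(v')} = 0` on `ℝ`. -/
def IsSupersolutionEig1D (F H f : ℝ → ℝ) (lam : ℝ) (v : ℝ → ℝ) : Prop :=
  ∀ φ : ℝ → ℝ, ContDiff ℝ 2 φ →
    ∀ x₀, IsLocalMin (fun x => v x - φ x) x₀ →
      0 ≤ max (lam + F (deriv (deriv φ) x₀) - f x₀) (H (deriv φ x₀))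

section OneDimAux

open Set Topology intervalIntegral

/-- quadratic helper -/
def quadP (A B C x₀ : ℝ) : ℝ → ℝ := fun x => A + B*(x - x₀) + C*(x - x₀)^2

lemma quadP_hasDerivAt (A B C x₀ x : ℝ) :
    HasDerivAt (quadP A B C x₀) (B + 2*C*(x - x₀)) x := by
  have h₁ : HasDerivAt (fun y : ℝ => y - x₀) 1 x := (hasDerivAt_id x).sub_const x₀
  have h₂ : HasDerivAt (fun y : ℝ => B * (y - x₀)) (B * 1) x := h₁.const_mul B
  have h₃ : HasDerivAt (fun y : ℝ => (y - x₀)^2) (2 * (x - x₀)^1 * 1) x := by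
    simpa using h₁.fun_pow 2
  have h₄ : HasDerivAt (fun y : ℝ => C * (y - x₀)^2) (C * (2 * (x - x₀)^1 * 1)) x :=
    h₃.const_mul C
  have := ((hasDerivAt_const x A).fun_add h₂).fun_add h₄
  exact this.congr_deriv (by ring)

lemma quadP_deriv (A B C x₀ : ℝ) :
    deriv (quadP A B C x₀) = fun x => B + 2*C*(x - x₀) :=
  funext fun x => (quadP_hasDerivAt A B C x₀ x).deriv

lemma quadP_deriv2 (A B C x₀ x : ℝ) :
    deriv (deriv (quadP A B C x₀)) x = 2*C := by
  rw [quadP_deriv]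
  have h₁ : HasDerivAt (fun y : ℝ => y - x₀) 1 x := (hasDerivAt_id x).sub_const x₀
  have h₂ : HasDerivAt (fun y : ℝ => 2*C * (y - x₀)) (2*C * 1) x := h₁.const_mul (2*C)
  have := (hasDerivAt_const x B).fun_add h₂
  have h3 : HasDerivAt (fun y : ℝ => B + 2*C*(y - x₀)) (2*C) x := by
    exact this.congr_deriv (by ring)
  exact h3.deriv

lemma quadP_contDiff (A B C x₀ : ℝ) : ContDiff ℝ 2 (quadP A B C x₀) := by
  have h0 : ContDiff ℝ 2 (fun x : ℝ => x - x₀) := contDiff_id.sub contDiff_const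
  exact (contDiff_const.add (contDiff_const.mul h0)).add (contDiff_const.mul (h0.pow 2))

lemma quadP_apply (A B C x₀ x : ℝ) : quadP A B C x₀ x = A + B*(x - x₀) + C*(x - x₀)^2 := rfl

lemma quadP_self (A B C x₀ : ℝ) : quadP A B C x₀ x₀ = A := by simp [quadP]

lemma quadP_deriv_self (A B C x₀ : ℝ) : deriv (quadP A B C x₀) x₀ = B := by
  rw [quadP_deriv]; simp

lemma le_chord_of_tests (w : ℝ → ℝ) (hw : Continuous w) {z y : ℝ} (hzy : z < y)
    (htest : ∀ x₀ ∈ Ioo z y, ∀ φ : ℝ → ℝ, ContDiff ℝ 2 φ →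
      IsLocalMax (fun x => w x - φ x) x₀ → 0 ≤ deriv (deriv φ) x₀) :
    ∀ t ∈ Ioo z y, w t ≤ w z + (w y - w z)/(y - z) * (t - z) := by
  intro t ht
  by_contra hcon
  push_neg at hcon
  set m := (w y - w z)/(y - z) with hm
  set η := w t - (w z + m * (t - z)) with hη
  have hηpos : 0 < η := by simp only [hη]; linarith
  have htz : 0 < t - z := sub_pos.2 ht.1
  have hyt : 0 < y - t := sub_pos.2 ht.2
  set ε := η / (2 * ((t - z) * (y - t))) with hε
  have hεpos : 0 < ε := by positivity
  set φ := quadP (w z) (m + ε * (y - z)) (-ε) z with hφ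
  have hφval : ∀ x, φ x = w z + m * (x - z) + ε * ((x - z) * (y - x)) := by
    intro x; simp only [hφ, quadP]; ring
  set D := fun x => w x - φ x with hD
  have hDcont : ContinuousOn D (Icc z y) :=
    (hw.sub ((quadP_contDiff _ _ _ _).continuous)).continuousOn
  obtain ⟨xs, hxs, hmax⟩ := isCompact_Icc.exists_isMaxOn (nonempty_Icc.2 hzy.le) hDcont
  have hDt : D t = η / 2 := by
    have : ε * ((t - z) * (y - t)) = η / 2 := by
      rw [hε]; field_simp
    simp only [hD, hφval t]
    rw [this] at *
    simp only [hη] at *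
    linarith [this]
  have hDz : D z = 0 := by simp [hD, hφval z]
  have hyzne : y - z ≠ 0 := sub_ne_zero.2 hzy.ne'
  have hDy : D y = 0 := by
    have h5 : m * (y - z) = w y - w z := div_mul_cancel₀ _ hyzne
    simp only [hD, hφval y]; rw [h5]; ring
  have hDxs : η / 2 ≤ D xs := by
    have := hmax (mem_Icc.2 ⟨ht.1.le, ht.2.le⟩)
    simpa [hDt] using this
  have hxsIoo : xs ∈ Ioo z y := by
    rcases eq_or_lt_of_le hxs.1 with h | h
    · exfalso; rw [← h] at hDxs; rw [hDz] at hDxs; linarith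
    rcases eq_or_lt_of_le hxs.2 with h2 | h2
    · exfalso; rw [h2] at hDxs; rw [hDy] at hDxs; linarith
    exact ⟨h, h2⟩
  have hloc : IsLocalMax (fun x => w x - φ x) xs := by
    have : Icc z y ∈ 𝓝 xs := Icc_mem_nhds hxsIoo.1 hxsIoo.2
    exact Filter.eventually_of_mem this fun x hx => hmax hx
  have := htest xs hxsIoo φ (hφ ▸ quadP_contDiff _ _ _ _) hloc
  rw [hφ, quadP_deriv2] at this
  linarith

lemma ge_chord_of_tests (w : ℝ → ℝ) (hw : Continuous w) {z y : ℝ} (hzy : z < y)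
    (htest : ∀ x₀ ∈ Ioo z y, ∀ φ : ℝ → ℝ, ContDiff ℝ 2 φ →
      IsLocalMin (fun x => w x - φ x) x₀ → deriv (deriv φ) x₀ ≤ 0) :
    ∀ t ∈ Ioo z y, w z + (w y - w z)/(y - z) * (t - z) ≤ w t := by
  have key := le_chord_of_tests (fun x => -w x) hw.neg hzy ?_
  · intro t ht
    have h6 := key t ht
    have h7 : (-w y - -w z)/(y - z) = -((w y - w z)/(y - z)) := by
      rw [show -w y - -w z = -(w y - w z) by ring, neg_div]
    rw [h7] at h6
    linarith
  · intro x₀ hx₀ φ hφ hmaxx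
    have h1 : IsLocalMin (fun x => w x - (-φ x)) x₀ := by
      have : (fun x => w x - (-φ x)) = fun x => -((fun x => -w x - φ x) x) := by
        funext x; ring
      rw [this]
      exact hmaxx.neg
    have h2 := htest x₀ hx₀ (fun x => -φ x) hφ.neg h1
    have h3 : deriv (fun x => -φ x) = fun x => -(deriv φ x) := funext fun x => deriv.neg
    have h4 : deriv (deriv (fun x => -φ x)) x₀ = -(deriv (deriv φ) x₀) := by
      rw [h3]
      exact deriv.neg
    rw [h4] at h2
    linarith


structure SolPack (a b lam : ℝ) (f v₁ u : ℝ → ℝ) where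
  s : ℝ → ℝ
  hderiv : ∀ x, HasDerivAt u (s x) x
  mono : Monotone s
  cont : Continuous s
  xm : ℝ
  xp : ℝ
  hlt : xm < xp
  hsa : ∀ x, x ≤ xm → s x = a
  hsb : ∀ x, xp ≤ x → s x = b
  hsgt : ∀ x, xm < x → a < s x
  hslt : ∀ x, x < xp → s x < b
  hreg : ∀ x ∈ Set.Ioo xm xp, s x = a + (v₁ x - v₁ xm)
  hfup : ∀ x, (x < xm ∨ xp < x) → lam ≤ f x
  hflow : ∀ x ∈ Set.Ioo xm xp, f x ≤ lam

section
variable {θ a b lam : ℝ} {F H f g v₁ v u S : ℝ → ℝ}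

-- Region identity: on an interval where a < S < b, S - v₁ is constant.
theorem region_id
    (huc : Continuous u)
    (hvc : Continuous v)
    (hder : ∀ x, HasDerivAt u (S x) x)
    (hvd : ∀ x, HasDerivAt v (v₁ x) x)
    (testU : ∀ x₀ : ℝ, ∀ φ : ℝ → ℝ, ContDiff ℝ 2 φ →
      IsLocalMax (fun x => (u x - v x) - φ x) x₀ → 0 ≤ deriv (deriv φ) x₀)
    (testL : ∀ x₀ : ℝ, a < S x₀ → S x₀ < b → ∀ φ : ℝ → ℝ, ContDiff ℝ 2 φ →
      IsLocalMin (fun x => (u x - v x) - φ x) x₀ → deriv (deriv φ) x₀ ≤ 0)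
    {c d : ℝ} (hreg : ∀ x ∈ Ioo c d, a < S x ∧ S x < b) :
    ∀ p ∈ Ioo c d, ∀ q ∈ Ioo c d, S p - v₁ p = S q - v₁ q := by
  intro p hp q hq
  set z := (c + min p q)/2 with hz
  set y := (max p q + d)/2 with hy
  have hzmin : z < min p q := by
    rw [hz]; have := lt_min hp.1 hq.1; linarith [min_le_left p q]
  have hymax : max p q < y := by
    rw [hy]; have := max_lt hp.2 hq.2; linarith [le_max_left p q]
  have hcz : c < z := by rw [hz]; have := lt_min hp.1 hq.1; linarith
  have hyd : y < d := by rw [hy]; have := max_lt hp.2 hq.2; linarith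
  have hzy : z < y := lt_trans (lt_of_lt_of_le hzmin (min_le_left _ _))
    (lt_of_le_of_lt (le_max_left _ _) hymax)
  have hsub : Ioo z y ⊆ Ioo c d := fun x hx => ⟨lt_trans hcz hx.1, lt_trans hx.2 hyd⟩
  set w := fun x => u x - v x with hw
  have hwc : Continuous w := huc.sub hvc
  -- w equals its chord on [z,y]
  set m := (w y - w z)/(y - z) with hm
  have hchord : ∀ t ∈ Ioo z y, w t = w z + m * (t - z) := by
    intro t ht
    have h1 := le_chord_of_tests w hwc hzy (fun x₀ hx₀ => testU x₀) t ht
    have h2 := ge_chord_of_tests w hwc hzy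
      (fun x₀ hx₀ φ hφ hmin => testL x₀ (hreg x₀ (hsub hx₀)).1 (hreg x₀ (hsub hx₀)).2 φ hφ hmin)
      t ht
    exact le_antisymm h1 h2
  -- hence deriv w is constantly m on Ioo z y
  have hderw : ∀ t ∈ Ioo z y, S t - v₁ t = m := by
    intro t ht
    have hev : w =ᶠ[𝓝 t] fun x => w z + m * (x - z) := by
      filter_upwards [Ioo_mem_nhds ht.1 ht.2] with x hx using hchord x hx
    have h1 : deriv w t = deriv (fun x => w z + m * (x - z)) t := hev.deriv_eq
    have h2 : deriv (fun x => w z + m * (x - z)) t = m := by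
      have : (fun x => w z + m * (x - z)) = quadP (w z) m 0 z := by
        funext x; simp [quadP]
      rw [this, quadP_deriv]; norm_num
    have h3 : deriv w t = S t - v₁ t := ((hder t).sub (hvd t)).deriv
    rw [h3] at h1; rw [h2] at h1; exact h1
  have hpz : p ∈ Ioo z y := ⟨lt_of_lt_of_le hzmin (min_le_left _ _),
    lt_of_le_of_lt (le_max_left _ _) hymax⟩
  have hqz : q ∈ Ioo z y := ⟨lt_of_lt_of_le hzmin (min_le_right _ _),
    lt_of_le_of_lt (le_max_right _ _) hymax⟩
  rw [hderw p hpz, hderw q hqz]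


theorem region_flow {c d : ℝ}
    (hFanti : StrictAnti F) (hF0 : F 0 = 0)
    (hgF : ∀ x, F (g x) = f x - lam) (hgcont : Continuous g)
    (hv₁int : ∀ p q : ℝ, v₁ p - v₁ q = ∫ t in q..p, g t)
    (hmono : Monotone S)
    (hid : ∀ p ∈ Ioo c d, ∀ q ∈ Ioo c d, S p - v₁ p = S q - v₁ q) :
    ∀ x ∈ Ioo c d, f x ≤ lam := by
  intro x hx
  by_contra hcon
  push_neg at hcon
  have h1 : F 0 < F (g x) := by rw [hgF, hF0]; linarith
  have hgx : g x < 0 := hFanti.lt_iff_gt.1 h1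
  have hev : ∀ᶠ y in 𝓝 x, g y < g x / 2 :=
    hgcont.continuousAt.eventually_lt_const (by linarith)
  obtain ⟨δ, hδ, hball⟩ := Metric.eventually_nhds_iff.1 hev
  set δ' := min δ (min (x - c) (d - x)) / 2 with hδ'
  have hδ'pos : 0 < δ' := by
    rw [hδ']
    have h2 : 0 < x - c := sub_pos.2 hx.1
    have h3 : 0 < d - x := sub_pos.2 hx.2
    positivity
  have hδ'le : δ' < δ := by
    rw [hδ']; have := min_le_left δ (min (x - c) (d - x)); linarith
  set p := x - δ' with hp
  set q := x + δ' with hq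
  have hpq : p < q := by rw [hp, hq]; linarith
  have hpIoo : p ∈ Ioo c d := by
    constructor
    · rw [hp]
      have h4 : δ' ≤ (x - c)/2 := by
        rw [hδ']
        have := min_le_right δ (min (x - c) (d - x))
        have := min_le_left (x - c) (d - x)
        have h5 := le_trans (min_le_right δ (min (x - c) (d - x)))
          (min_le_left (x - c) (d - x))
        linarith
      linarith [sub_pos.2 hx.1]
    · rw [hp]; linarith [hδ'pos, hx.2]
  have hqIoo : q ∈ Ioo c d := by
    constructor
    · rw [hq]; linarith [hδ'pos, hx.1]
    · rw [hq]
      have h5 := le_trans (min_le_right δ (min (x - c) (d - x)))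
        (min_le_right (x - c) (d - x))
      have h4 : δ' ≤ (d - x)/2 := by rw [hδ']; linarith
      linarith [sub_pos.2 hx.2]
  have hS : S p ≤ S q := hmono hpq.le
  have hid' := hid q hqIoo p hpIoo
  have hint : S q - S p = ∫ t in p..q, g t := by
    rw [← hv₁int q p]; linarith
  have hmono_int : (∫ t in p..q, g t) ≤ ∫ _t in p..q, g x / 2 := by
    refine integral_mono_on hpq.le (hgcont.intervalIntegrable p q)
      intervalIntegrable_const ?_
    intro y hy
    refine (hball ?_).le
    rw [Real.dist_eq, abs_lt]
    constructor
    · have := hy.1; rw [hp] at this; linarith [hδ'le]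
    · have := hy.2; rw [hq] at this; linarith [hδ'le]
  rw [integral_const, smul_eq_mul] at hmono_int
  have : q - p = 2 * δ' := by rw [hp, hq]; ring
  rw [this] at hmono_int
  nlinarith

theorem affine_fup {c d r : ℝ}
    (hF0 : F 0 = 0)
    (huc : Continuous u)
    (hder : ∀ x, HasDerivAt u (S x) x)
    (hsub : IsSubsolutionEig1D F H f lam u)
    (hconst : ∀ y ∈ Ioo c d, S y = r) :
    ∀ x ∈ Ioo c d, lam ≤ f x := by
  intro x hx
  have haff : ∀ y ∈ Ioo c d, u y = u x + r * (y - x) := by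
    intro y hy
    rcases lt_trichotomy x y with h | h | h
    · obtain ⟨ζ, hζ, hs⟩ := exists_deriv_eq_slope u h huc.continuousOn
        (fun t _ => (hder t).differentiableAt.differentiableWithinAt)
      rw [(hder ζ).deriv, hconst ζ ⟨lt_trans hx.1 hζ.1, lt_trans hζ.2 hy.2⟩] at hs
      have := (div_eq_iff (sub_ne_zero.2 h.ne')).1 hs.symm
      linarith
    · rw [← h]; ring_nf
    · obtain ⟨ζ, hζ, hs⟩ := exists_deriv_eq_slope u h huc.continuousOn
        (fun t _ => (hder t).differentiableAt.differentiableWithinAt)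
      rw [(hder ζ).deriv, hconst ζ ⟨lt_trans hy.1 hζ.1, lt_trans hζ.2 hx.2⟩] at hs
      have h2 := (div_eq_iff (sub_ne_zero.2 h.ne')).1 hs.symm
      have h3 : r*(x - y) = -(r*(y - x)) := by ring
      linarith
  set φ := quadP (u x) r 0 x with hφ
  have hmax : IsLocalMax (fun t => u t - φ t) x := by
    filter_upwards [Ioo_mem_nhds hx.1 hx.2] with t ht
    have h1 : φ t = u x + r * (t - x) := by simp [hφ, quadP]
    have h2 : φ x = u x := quadP_self _ _ _ _
    simp only [h1, h2, haff t ht]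
    norm_num
  have key := hsub φ (hφ ▸ quadP_contDiff _ _ _ _) x hmax
  have key1 := le_trans (le_max_left _ _) key
  rw [hφ, quadP_deriv2] at key1
  rw [show (2:ℝ)*0 = 0 by norm_num, hF0] at key1
  linarith

set_option maxHeartbeats 2000000 in
theorem buildPack
    (hθ : 0 < θ)
    (hFanti : StrictAnti F) (hF0 : F 0 = 0)
    (hFlin : ∀ m : ℝ, 0 ≤ m → F m ≤ -θ * m)
    (hgF : ∀ x, F (g x) = f x - lam)
    (hgcont : Continuous g)
    (hv₁d : ∀ x, HasDerivAt v₁ (g x) x)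
    (hv₁int : ∀ p q : ℝ, v₁ p - v₁ q = ∫ t in q..p, g t)
    (hv2 : ContDiff ℝ 2 v)
    (hvd : ∀ x, HasDerivAt v (v₁ x) x)
    (hab : a < b)
    (hHneg : ∀ r, a < r → r < b → H r < 0)
    (hu : ConvexOn ℝ Set.univ u) (huc : Continuous u)
    (hsub : IsSubsolutionEig1D F H f lam u)
    (hsup : IsSupersolutionEig1D F H f lam u)
    (hlimT : Tendsto (fun y => u y / y) atTop (𝓝 b))
    (hlimB : Tendsto (fun y => u y / y) atBot (𝓝 a))
    (hfbigT : ∀ R : ℝ, ∃ x, R < x ∧ lam < f x)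
    (hfbigB : ∀ R : ℝ, ∃ x, x < R ∧ lam < f x) :
    Nonempty (SolPack a b lam f v₁ u) := by
  classical
  have hslm : ∀ x : ℝ, ∀ {y z : ℝ}, y ≠ x → z ≠ x → y ≤ z → slope u x y ≤ slope u x z := by
    intro x y z hy hz hyz
    have := hu.slope_mono (mem_univ x)
    exact this ⟨mem_univ y, hy⟩ ⟨mem_univ z, hz⟩ hyz
  set S : ℝ → ℝ := fun x => sInf (slope u x '' Ioi x) with hSdef
  set L : ℝ → ℝ := fun x => sSup (slope u x '' Iio x) with hLdef
  have hSd : ∀ x, S x = sInf (slope u x '' Ioi x) := fun x => rfl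
  have hLd : ∀ x, L x = sSup (slope u x '' Iio x) := fun x => rfl
  have hneR : ∀ x, (slope u x '' Ioi x).Nonempty := fun x => ⟨_, ⟨x+1, by simp, rfl⟩⟩
  have hneL : ∀ x, (slope u x '' Iio x).Nonempty := fun x => ⟨_, ⟨x-1, by simp, rfl⟩⟩
  have hbddR : ∀ x, BddBelow (slope u x '' Ioi x) := by
    intro x
    refine ⟨slope u x (x-1), ?_⟩
    rintro r ⟨y, hy, rfl⟩
    exact hslm x (by norm_num) (ne_of_gt hy) (by simp at hy ⊢; linarith)
  have hbddL : ∀ x, BddAbove (slope u x '' Iio x) := by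
    intro x
    refine ⟨slope u x (x+1), ?_⟩
    rintro r ⟨y, hy, rfl⟩
    exact hslm x (ne_of_lt hy) (by norm_num) (by simp at hy ⊢; linarith)
  have hSle : ∀ x y, x < y → S x ≤ slope u x y := fun x y hy =>
    csInf_le (hbddR x) ⟨y, hy, rfl⟩
  have hLge : ∀ x y, y < x → slope u x y ≤ L x := fun x y hy =>
    le_csSup (hbddL x) ⟨y, hy, rfl⟩
  have hLS : ∀ x, L x ≤ S x := by
    intro x
    apply csSup_le (hneL x)
    rintro r ⟨y, hy, rfl⟩
    apply le_csInf (hneR x)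
    rintro r' ⟨y', hy', rfl⟩
    exact hslm x (ne_of_lt hy) (ne_of_gt hy') (le_trans (le_of_lt hy) (le_of_lt hy'))
  have hsubR : ∀ x y, x ≤ y → u x + S x * (y - x) ≤ u y := by
    intro x y hxy
    rcases eq_or_lt_of_le hxy with rfl | hlt
    · simp
    · have h1 := hSle x y hlt
      rw [slope_def_field] at h1
      have h2 := (le_div_iff₀ (sub_pos.2 hlt)).1 h1
      linarith
  have hsubL : ∀ x y, y ≤ x → u x + L x * (y - x) ≤ u y := by
    intro x y hxy
    rcases eq_or_lt_of_le hxy with rfl | hlt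
    · simp
    · have h1 := hLge x y hlt
      rw [slope_def_field] at h1
      have h2 := (div_le_iff_of_neg (sub_neg.2 hlt)).1 h1
      linarith
  -- slope limits at infinity
  have hslT : ∀ x, Tendsto (fun y => slope u x y) atTop (𝓝 b) := by
    intro x
    have hinv : Tendsto (fun y : ℝ => (y - x)⁻¹) atTop (𝓝 0) :=
      tendsto_inv_atTop_zero.comp (tendsto_atTop_add_const_right _ (-x) tendsto_id)
    have h2 : Tendsto (fun y : ℝ => y / (y - x)) atTop (𝓝 1) := by
      have h3 : Tendsto (fun y : ℝ => 1 + x * (y - x)⁻¹) atTop (𝓝 (1 + x * 0)) :=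
        tendsto_const_nhds.add (hinv.const_mul x)
      rw [mul_zero, add_zero] at h3
      refine h3.congr' ?_
      filter_upwards [eventually_gt_atTop x] with y hy
      have : y - x ≠ 0 := sub_ne_zero.2 hy.ne'
      field_simp
      ring
    have h4 : Tendsto (fun y : ℝ => u x * (y - x)⁻¹) atTop (𝓝 0) := by
      simpa using hinv.const_mul (u x)
    have h5 : Tendsto (fun y : ℝ => (u y / y) * (y / (y - x)) - u x * (y - x)⁻¹)
        atTop (𝓝 (b * 1 - 0)) := (hlimT.mul h2).sub h4
    rw [mul_one, sub_zero] at h5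
    refine h5.congr' ?_
    filter_upwards [eventually_gt_atTop (max x 0)] with y hy
    rw [max_lt_iff] at hy
    have hyx : y - x ≠ 0 := sub_ne_zero.2 hy.1.ne'
    have hy0 : y ≠ 0 := hy.2.ne'
    rw [slope_def_field]
    field_simp
  have hslB : ∀ x, Tendsto (fun y => slope u x y) atBot (𝓝 a) := by
    intro x
    have hneg : Tendsto (fun y : ℝ => -y + x) atBot atTop :=
      tendsto_atTop_add_const_right atBot x
        (tendsto_neg_atBot_atTop : Tendsto (fun y : ℝ => -y) atBot atTop)
    have hinv : Tendsto (fun y : ℝ => (y - x)⁻¹) atBot (𝓝 0) := by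
      have h0 : Tendsto (fun y : ℝ => (-y + x)⁻¹) atBot (𝓝 0) :=
        tendsto_inv_atTop_zero.comp hneg
      have h1 := h0.neg
      rw [neg_zero] at h1
      refine h1.congr fun y => ?_
      rw [← inv_neg]; ring_nf
    have h2 : Tendsto (fun y : ℝ => y / (y - x)) atBot (𝓝 1) := by
      have h3 : Tendsto (fun y : ℝ => 1 + x * (y - x)⁻¹) atBot (𝓝 (1 + x * 0)) :=
        tendsto_const_nhds.add (hinv.const_mul x)
      rw [mul_zero, add_zero] at h3
      refine h3.congr' ?_
      filter_upwards [eventually_lt_atBot x] with y hy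
      have : y - x ≠ 0 := sub_ne_zero.2 hy.ne
      field_simp
      ring
    have h4 : Tendsto (fun y : ℝ => u x * (y - x)⁻¹) atBot (𝓝 0) := by
      simpa using hinv.const_mul (u x)
    have h5 : Tendsto (fun y : ℝ => (u y / y) * (y / (y - x)) - u x * (y - x)⁻¹)
        atBot (𝓝 (a * 1 - 0)) := (hlimB.mul h2).sub h4
    rw [mul_one, sub_zero] at h5
    refine h5.congr' ?_
    filter_upwards [eventually_lt_atBot (min x 0)] with y hy
    rw [lt_min_iff] at hy
    have hyx : y - x ≠ 0 := sub_ne_zero.2 hy.1.ne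
    have hy0 : y ≠ 0 := hy.2.ne
    rw [slope_def_field]
    field_simp
  have haL : ∀ x, a ≤ L x := by
    intro x
    refine le_of_tendsto (hslB x) ?_
    filter_upwards [eventually_lt_atBot x] with y hy using hLge x y hy
  have hSb : ∀ x, S x ≤ b := by
    intro x
    refine ge_of_tendsto (hslT x) ?_
    filter_upwards [eventually_gt_atTop x] with y hy using hSle x y hy
  -- no kink
  have hLSeq : ∀ x, L x = S x := by
    intro x
    by_contra hne
    have hpq : L x < S x := lt_of_le_of_ne (hLS x) hne
    set p := L x
    set q := S x
    set r := (p + q)/2 with hr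
    set η := (q - p)/2 with hη
    have hηpos : 0 < η := by simp only [hη]; linarith
    have hra : a < r := lt_of_le_of_lt (haL x) (by simp only [hr]; linarith)
    have hrb : r < b := lt_of_lt_of_le (by simp only [hr]; linarith) (hSb x)
    set M := max 1 ((lam - f x + 1)/θ) with hM
    have hM1 : (1:ℝ) ≤ M := le_max_left _ _
    have hMpos : (0:ℝ) < M := lt_of_lt_of_le one_pos hM1
    have hFM : lam + F M - f x < 0 := by
      have h1 : F M ≤ -θ * M := hFlin M hMpos.le
      have h2 : (lam - f x + 1)/θ ≤ M := le_max_right _ _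
      have h3 : lam - f x + 1 ≤ θ * M := (div_le_iff₀' hθ).1 h2
      nlinarith
    set φ := quadP (u x) r (M/2) x with hφ
    have hmin : IsLocalMin (fun y => u y - φ y) x := by
      have hδ : (0:ℝ) < 2*η/M := by positivity
      filter_upwards [Metric.ball_mem_nhds x hδ] with y hy
      rw [Real.ball_eq_Ioo] at hy
      have hφy : φ y = u x + r*(y - x) + (M/2)*(y - x)^2 := rfl
      have hφx : φ x = u x := quadP_self _ _ _ _
      rw [hφx, hφy]
      rcases le_or_gt x y with hcase | hcase
      · have h1 := hsubR x y hcase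
        have h2 : y - x < 2*η/M := by linarith [hy.2]
        have h5 : M * (y - x) ≤ 2*η := by
          have := (lt_div_iff₀ hMpos).1 h2
          nlinarith
        have hqr : q*(y-x) - r*(y-x) = η*(y-x) := by rw [hr, hη]; ring
        have h6 : M/2*(y - x)^2 ≤ η*(y - x) := by
          nlinarith [mul_le_mul_of_nonneg_right h5 (sub_nonneg.2 hcase)]
        linarith [h1, hqr, h6]
      · have h1 := hsubL x y hcase.le
        have h2 : x - y < 2*η/M := by linarith [hy.1]
        have h5 : M * (x - y) ≤ 2*η := by
          have := (lt_div_iff₀ hMpos).1 h2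
          nlinarith
        have hqr : p*(y-x) - r*(y-x) = η*(x-y) := by rw [hr, hη]; ring
        have h6 : M/2*(y - x)^2 ≤ η*(x - y) := by
          nlinarith [mul_le_mul_of_nonneg_right h5 (sub_nonneg.2 (le_of_lt hcase))]
        linarith [h1, hqr, h6]
    have key := hsup φ (hφ ▸ quadP_contDiff _ _ _ _) x hmin
    rw [hφ, quadP_deriv2, quadP_deriv_self] at key
    rw [show 2*(M/2) = M by ring] at key
    exact absurd key (not_le.2 (max_lt hFM (hHneg r hra hrb)))
  have haS : ∀ x, a ≤ S x := fun x => (hLSeq x) ▸ haL x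
  -- derivative everywhere
  have hder : ∀ x, HasDerivAt u (S x) x := by
    intro x
    rw [hasDerivAt_iff_tendsto_slope]
    rw [Metric.tendsto_nhdsWithin_nhds]
    intro ε hε
    obtain ⟨rz, ⟨z, hz, rfl⟩, hzlt⟩ : ∃ r ∈ slope u x '' Ioi x, r < S x + ε := by
      refine exists_lt_of_csInf_lt (hneR x) ?_
      rw [← hSd]; linarith
    obtain ⟨rw', ⟨w, hw, rfl⟩, hwgt⟩ : ∃ r ∈ slope u x '' Iio x, S x - ε < r := by
      refine exists_lt_of_lt_csSup (hneL x) ?_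
      rw [← hLd, hLSeq]; linarith
    rw [mem_Ioi] at hz; rw [mem_Iio] at hw
    refine ⟨min (z - x) (x - w), by simp [sub_pos.2 hz, sub_pos.2 hw], ?_⟩
    intro y hy hyd
    rw [Real.dist_eq] at hyd ⊢
    rw [lt_min_iff] at hyd
    have hyx : y ≠ x := hy
    rcases lt_or_gt_of_ne hyx with hcase | hcase
    · have hwy : w < y := by cases' abs_lt.1 hyd.2 with h1 h2; linarith
      have h1 : slope u x w ≤ slope u x y := hslm x (ne_of_lt hw) hyx hwy.le
      have h2 : slope u x y ≤ L x := hLge x y hcase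
      rw [hLSeq] at h2
      rw [abs_lt]; constructor <;> linarith
    · have hyz : y ≤ z := by cases' abs_lt.1 hyd.1 with h1 h2; linarith
      have h1 : slope u x y ≤ slope u x z := hslm x hyx (ne_of_gt hz) hyz
      have h2 : S x ≤ slope u x y := hSle x y hcase
      rw [abs_lt]; constructor <;> linarith
  have hmono : Monotone S := by
    intro x y hxy
    rcases eq_or_lt_of_le hxy with rfl | hlt
    · exact le_refl _
    · calc S x ≤ slope u x y := hSle x y hlt
        _ = slope u y x := slope_comm u x y
        _ ≤ L y := hLge y x hlt
        _ = S y := hLSeq y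
  -- continuity of the derivative
  have hcont : Continuous S := by
    rw [continuous_iff_continuousAt]
    intro x
    rw [continuousAt_iff_continuous_left'_right']
    constructor
    · rw [ContinuousWithinAt, Metric.tendsto_nhdsWithin_nhds]
      intro ε hε
      obtain ⟨rw', ⟨w, hw, rfl⟩, hwgt⟩ : ∃ r ∈ slope u x '' Iio x, S x - ε/2 < r := by
        refine exists_lt_of_lt_csSup (hneL x) ?_
        rw [← hLd, hLSeq]; linarith
      rw [mem_Iio] at hw
      have hC : ContinuousAt (fun y => (u y - u w)/(y - w)) x := by
        exact (huc.continuousAt.sub continuousAt_const).div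
          (continuousAt_id.sub continuousAt_const) (sub_ne_zero.2 (ne_of_gt hw))
      have hCx : (u x - u w)/(x - w) = slope u x w := by
        rw [slope_comm, slope_def_field]
      have hev : ∀ᶠ y in 𝓝 x, S x - ε < (u y - u w)/(y - w) := by
        refine hC.eventually_const_lt ?_
        show S x - ε < (u x - u w)/(x - w)
        rw [hCx]; linarith
      obtain ⟨δ₁, hδ₁, hball⟩ := Metric.eventually_nhds_iff.1 hev
      refine ⟨min δ₁ (x - w), by simp [hδ₁, sub_pos.2 hw], ?_⟩
      intro y hy hyd
      rw [mem_Iio] at hy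
      rw [Real.dist_eq, lt_min_iff] at hyd
      have hwy : w < y := by cases' abs_lt.1 hyd.2 with h1 h2; linarith
      have h1 : slope u w y ≤ S y := by
        have := hu.slope_le_deriv (mem_univ w) (mem_univ y) hwy (hder y).differentiableAt
        rwa [(hder y).deriv] at this
      have h2 : (u y - u w)/(y - w) = slope u w y := by rw [slope_def_field]
      have h3 := hball (show dist y x < δ₁ by rw [Real.dist_eq]; exact hyd.1)
      have h4 : S y ≤ S x := hmono hy.le
      rw [Real.dist_eq, abs_lt]
      constructor <;> [linarith [h2 ▸ h3]; linarith]
    · rw [ContinuousWithinAt, Metric.tendsto_nhdsWithin_nhds]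
      intro ε hε
      obtain ⟨rz, ⟨z, hz, rfl⟩, hzlt⟩ : ∃ r ∈ slope u x '' Ioi x, r < S x + ε/2 := by
        refine exists_lt_of_csInf_lt (hneR x) ?_
        rw [← hSd]; linarith
      rw [mem_Ioi] at hz
      have hC : ContinuousAt (fun y => (u z - u y)/(z - y)) x := by
        exact (continuousAt_const.sub huc.continuousAt).div
          (continuousAt_const.sub continuousAt_id) (sub_ne_zero.2 (ne_of_gt hz))
      have hCx : (u z - u x)/(z - x) = slope u x z := by rw [slope_def_field]
      have hev : ∀ᶠ y in 𝓝 x, (u z - u y)/(z - y) < S x + ε := by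
        refine hC.eventually_lt_const ?_
        show (u z - u x)/(z - x) < S x + ε
        rw [hCx]; linarith
      obtain ⟨δ₁, hδ₁, hball⟩ := Metric.eventually_nhds_iff.1 hev
      refine ⟨min δ₁ (z - x), by simp [hδ₁, sub_pos.2 hz], ?_⟩
      intro y hy hyd
      rw [mem_Ioi] at hy
      rw [Real.dist_eq, lt_min_iff] at hyd
      have hyz : y < z := by cases' abs_lt.1 hyd.2 with h1 h2; linarith
      have h1 : S y ≤ slope u y z := by
        have := hu.deriv_le_slope (mem_univ y) (mem_univ z) hyz (hder y).differentiableAt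
        rwa [(hder y).deriv] at this
      have h2 : (u z - u y)/(z - y) = slope u y z := by rw [slope_def_field]
      have h3 := hball (show dist y x < δ₁ by rw [Real.dist_eq]; exact hyd.1)
      have h4 : S x ≤ S y := hmono hy.le
      rw [Real.dist_eq, abs_lt]
      constructor <;> [linarith; linarith [h2 ▸ h3]]
  -- viscosity test transfer lemmas with the shifted function u - v
  have h2eq : (2 : WithTop ℕ∞) = 1 + 1 := by norm_num
  have hψfacts : ∀ φ : ℝ → ℝ, ContDiff ℝ 2 φ → ∀ x₀ : ℝ,
      ContDiff ℝ 2 (fun x => φ x + v x) ∧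
      deriv (fun x => φ x + v x) x₀ = deriv φ x₀ + v₁ x₀ ∧
      deriv (deriv (fun x => φ x + v x)) x₀ = deriv (deriv φ) x₀ + g x₀ := by
    intro φ hφ x₀
    have hφd : Differentiable ℝ φ := hφ.differentiable two_ne_zero
    have hvd' : Differentiable ℝ v := hv2.differentiable two_ne_zero
    have hφ' : ContDiff ℝ 1 (deriv φ) := by
      rw [h2eq, contDiff_succ_iff_deriv] at hφ
      exact hφ.2.2
    have hderiv_sum : deriv (fun x => φ x + v x) = fun x => deriv φ x + v₁ x := by
      funext x
      rw [deriv_fun_add (hφd x) (hvd' x), (hvd x).deriv]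
    refine ⟨hφ.add hv2, by rw [hderiv_sum], ?_⟩
    rw [hderiv_sum]
    rw [deriv_fun_add ((hφ'.differentiable one_ne_zero) x₀) (hv₁d x₀).differentiableAt,
      (hv₁d x₀).deriv]
  have htestU : ∀ x₀ : ℝ, ∀ φ : ℝ → ℝ, ContDiff ℝ 2 φ →
      IsLocalMax (fun x => (u x - v x) - φ x) x₀ → 0 ≤ deriv (deriv φ) x₀ := by
    intro x₀ φ hφ hmax
    obtain ⟨hψ2, hψd1, hψd2⟩ := hψfacts φ hφ x₀
    have hmax' : IsLocalMax (fun x => u x - (fun x => φ x + v x) x) x₀ := by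
      have : (fun x => u x - (φ x + v x)) = fun x => (u x - v x) - φ x := by
        funext x; ring
      simpa [this] using hmax
    have key := hsub _ hψ2 x₀ hmax'
    have key1 : lam + F (deriv (deriv (fun x => φ x + v x)) x₀) - f x₀ ≤ 0 :=
      le_trans (le_max_left _ _) key
    rw [hψd2] at key1
    by_contra hcon
    push_neg at hcon
    have h1 : deriv (deriv φ) x₀ + g x₀ < g x₀ := by linarith
    have h2 := hFanti h1
    rw [hgF] at h2
    linarith
  have htestL : ∀ x₀ : ℝ, a < S x₀ → S x₀ < b → ∀ φ : ℝ → ℝ, ContDiff ℝ 2 φ →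
      IsLocalMin (fun x => (u x - v x) - φ x) x₀ → deriv (deriv φ) x₀ ≤ 0 := by
    intro x₀ hsa hsb φ hφ hmin
    obtain ⟨hψ2, hψd1, hψd2⟩ := hψfacts φ hφ x₀
    have hmin' : IsLocalMin (fun x => u x - (fun x => φ x + v x) x) x₀ := by
      have : (fun x => u x - (φ x + v x)) = fun x => (u x - v x) - φ x := by
        funext x; ring
      simpa [this] using hmin
    have hψder : HasDerivAt (fun x => φ x + v x) (deriv φ x₀ + v₁ x₀) x₀ :=
      ((hφ.differentiable two_ne_zero x₀).hasDerivAt).add (hvd x₀)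
    have hzero := hmin'.hasDerivAt_eq_zero ((hder x₀).sub hψder)
    have hslope : deriv φ x₀ + v₁ x₀ = S x₀ := by linarith [sub_eq_zero.1 hzero]
    have key := hsup _ hψ2 x₀ hmin'
    have hH : H (deriv (fun x => φ x + v x) x₀) < 0 := by
      rw [hψd1, hslope]; exact hHneg _ hsa hsb
    have key1 : 0 ≤ lam + F (deriv (deriv (fun x => φ x + v x)) x₀) - f x₀ := by
      rcases le_max_iff.1 key with hk | hk
      · exact hk
      · linarith
    rw [hψd2] at key1
    by_contra hcon
    push_neg at hcon
    have h1 : g x₀ < deriv (deriv φ) x₀ + g x₀ := by linarith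
    have h2 := hFanti h1
    rw [hgF] at h2
    linarith
  -- region machinery
  have hregid : ∀ c d : ℝ, (∀ x ∈ Ioo c d, a < S x ∧ S x < b) →
      ∀ p ∈ Ioo c d, ∀ q ∈ Ioo c d, S p - v₁ p = S q - v₁ q :=
    fun c d hcd => region_id huc hv2.continuous hder hvd htestU htestL hcd
  have hregf : ∀ c d : ℝ, (∀ x ∈ Ioo c d, a < S x ∧ S x < b) →
      ∀ x ∈ Ioo c d, f x ≤ lam :=
    fun c d hcd => region_flow hFanti hF0 hgF hgcont hv₁int hmono (hregid c d hcd)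
  have haffup : ∀ c d r : ℝ, (∀ y ∈ Ioo c d, S y = r) → ∀ x ∈ Ioo c d, lam ≤ f x :=
    fun c d r hconst => affine_fup hF0 huc hder hsub hconst
  have hv₁c : Continuous v₁ := continuous_iff_continuousAt.2 fun x => (hv₁d x).continuousAt
  -- if S is constant r, then slope u x y = r for suitable y, via MVT
  have hmvt : ∀ x y : ℝ, x < y → ∃ ζ ∈ Ioo x y, S ζ = slope u x y := by
    intro x y hxy
    obtain ⟨ζ, hζ, hs⟩ := exists_deriv_eq_slope u hxy huc.continuousOn
      (fun t _ => (hder t).differentiableAt.differentiableWithinAt)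
    exact ⟨ζ, hζ, by rw [← (hder ζ).deriv, hs, slope_def_field]⟩
  have hSa_ne : ∃ x, S x = a := by
    by_contra hno
    push_neg at hno
    have hgt : ∀ x, a < S x := fun x => lt_of_le_of_ne (haS x) (Ne.symm (hno x))
    by_cases hB : ∃ x, S x < b
    · obtain ⟨xb, hxb⟩ := hB
      obtain ⟨x0, hx0, hf0⟩ := hfbigB xb
      have hcond : ∀ x ∈ Ioo (x0 - 1) xb, a < S x ∧ S x < b :=
        fun x hx => ⟨hgt x, lt_of_le_of_lt (hmono hx.2.le) hxb⟩
      exact absurd (hregf (x0 - 1) xb hcond x0 ⟨by linarith, hx0⟩) (not_le.2 hf0)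
    · push_neg at hB
      have hSbeq : ∀ x, S x = b := fun x => le_antisymm (hSb x) (hB x)
      have h1 : Tendsto (fun y => slope u 0 y) atBot (𝓝 b) := by
        refine tendsto_const_nhds.congr' ?_
        filter_upwards [eventually_lt_atBot (0:ℝ)] with y hy
        obtain ⟨ζ, hζ, hs⟩ := hmvt y 0 hy
        rw [slope_comm, ← hs, hSbeq ζ]
      exact absurd (tendsto_nhds_unique h1 (hslB 0)) (ne_of_gt hab)
  have hSb_ne : ∃ x, S x = b := by
    by_contra hno
    push_neg at hno
    have hltb : ∀ x, S x < b := fun x => lt_of_le_of_ne (hSb x) (hno x)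
    by_cases hB : ∃ x, a < S x
    · obtain ⟨xa, hxa⟩ := hB
      obtain ⟨x0, hx0, hf0⟩ := hfbigT xa
      have hcond : ∀ x ∈ Ioo xa (x0 + 1), a < S x ∧ S x < b :=
        fun x hx => ⟨lt_of_lt_of_le hxa (hmono hx.1.le), hltb x⟩
      exact absurd (hregf xa (x0 + 1) hcond x0 ⟨hx0, by linarith⟩) (not_le.2 hf0)
    · push_neg at hB
      have hSaeq : ∀ x, S x = a := fun x => le_antisymm (hB x) (haS x)
      have h1 : Tendsto (fun y => slope u 0 y) atTop (𝓝 a) := by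
        refine tendsto_const_nhds.congr' ?_
        filter_upwards [eventually_gt_atTop (0:ℝ)] with y hy
        obtain ⟨ζ, hζ, hs⟩ := hmvt 0 y hy
        rw [← hs, hSaeq ζ]
      exact absurd (tendsto_nhds_unique h1 (hslT 0)) (ne_of_lt hab)
  obtain ⟨xa0, hxa0⟩ := hSa_ne
  obtain ⟨xb0, hxb0⟩ := hSb_ne
  have hclosedA : IsClosed {x : ℝ | S x = a} := isClosed_eq hcont continuous_const
  have hclosedB : IsClosed {x : ℝ | S x = b} := isClosed_eq hcont continuous_const
  have hbddA : BddAbove {x : ℝ | S x = a} := by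
    refine ⟨xb0, fun x hx => ?_⟩
    by_contra hgt
    push_neg at hgt
    have := hmono hgt.le
    rw [hxb0, hx] at this
    exact absurd (lt_of_lt_of_le hab this) (lt_irrefl _)
  have hbddB : BddBelow {x : ℝ | S x = b} := by
    refine ⟨xa0, fun x hx => ?_⟩
    by_contra hgt
    push_neg at hgt
    have := hmono hgt.le
    rw [hxa0, hx] at this
    exact absurd (lt_of_le_of_lt this hab) (lt_irrefl _)
  set xm := sSup {x : ℝ | S x = a} with hxm
  set xp := sInf {x : ℝ | S x = b} with hxp
  have hSxm : S xm = a := hclosedA.csSup_mem ⟨xa0, hxa0⟩ hbddA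
  have hSxp : S xp = b := hclosedB.csInf_mem ⟨xb0, hxb0⟩ hbddB
  have hlt : xm < xp := by
    by_contra hle
    push_neg at hle
    have := hmono hle
    rw [hSxm, hSxp] at this
    exact absurd (lt_of_lt_of_le hab this) (lt_irrefl _)
  have hsa : ∀ x, x ≤ xm → S x = a :=
    fun x hx => le_antisymm (by rw [← hSxm]; exact hmono hx) (haS x)
  have hsb : ∀ x, xp ≤ x → S x = b :=
    fun x hx => le_antisymm (hSb x) (by rw [← hSxp]; exact hmono hx)
  have hsgt : ∀ x, xm < x → a < S x := by
    intro x hx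
    refine lt_of_le_of_ne (haS x) fun heq => ?_
    exact absurd (le_csSup hbddA (show x ∈ {x : ℝ | S x = a} from heq.symm)) (not_le.2 hx)
  have hslt : ∀ x, x < xp → S x < b := by
    intro x hx
    refine lt_of_le_of_ne (hSb x) fun heq => ?_
    exact absurd (csInf_le hbddB (show x ∈ {x : ℝ | S x = b} from heq)) (not_le.2 hx)
  have hregmem : ∀ x ∈ Ioo xm xp, a < S x ∧ S x < b :=
    fun x hx => ⟨hsgt x hx.1, hslt x hx.2⟩
  have hreg : ∀ x ∈ Ioo xm xp, S x = a + (v₁ x - v₁ xm) := by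
    intro x hx
    have h1 : Tendsto (fun q => S q - v₁ q) (𝓝[>] xm) (𝓝 (a - v₁ xm)) := by
      have := ((hcont.tendsto xm).sub (hv₁c.tendsto xm)).mono_left
        (nhdsWithin_le_nhds (s := Ioi xm))
      rwa [hSxm] at this
    have h2 : Tendsto (fun q => S q - v₁ q) (𝓝[>] xm) (𝓝 (S x - v₁ x)) := by
      refine tendsto_const_nhds.congr' ?_
      filter_upwards [Ioo_mem_nhdsGT_of_mem ⟨le_refl xm, hx.1⟩] with q hq
      exact hregid xm xp hregmem x hx q ⟨hq.1, lt_trans hq.2 hx.2⟩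
    have := tendsto_nhds_unique h1 h2
    linarith
  have hfup : ∀ x, (x < xm ∨ xp < x) → lam ≤ f x := by
    intro x hx
    rcases hx with hx | hx
    · exact haffup (x - 1) xm a (fun y hy => hsa y hy.2.le) x ⟨by linarith, hx⟩
    · exact haffup xp (x + 1) b (fun y hy => hsb y hy.1.le) x ⟨hx, by linarith⟩
  exact ⟨⟨S, hder, hmono, hcont, xm, xp, hlt, hsa, hsb, hsgt, hslt, hreg, hfup,
    hregf xm xp hregmem⟩⟩

theorem xm_not_lt
    (hFanti : StrictAnti F) (hF0 : F 0 = 0) (hgF : ∀ x, F (g x) = f x - lam)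
    (hv₁int : ∀ p q : ℝ, v₁ p - v₁ q = ∫ t in q..p, g t)
    (hv₁c : Continuous v₁)
    (P : SolPack a b lam f v₁ u₁) (Q : SolPack a b lam f v₁ u₂)
    (h : P.xm < Q.xm) : False := by
  set e := min P.xp Q.xm with he'
  have he : P.xm < e := lt_min P.hlt h
  have hJ : ∀ y ∈ Ioo P.xm e, g y = 0 := by
    intro y hy
    have h1 : f y = lam := le_antisymm
      (P.hflow y ⟨hy.1, lt_of_lt_of_le hy.2 (min_le_left _ _)⟩)
      (Q.hfup y (Or.inl (lt_of_lt_of_le hy.2 (min_le_right _ _))))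
    refine hFanti.injective ?_
    rw [hgF, h1, hF0, sub_self]
  set x := (P.xm + e)/2 with hx'
  have hx : x ∈ Ioo P.xm e := ⟨by rw [hx']; linarith, by rw [hx']; linarith⟩
  have hv₁const : ∀ q ∈ Ioo P.xm x, v₁ q = v₁ x := by
    intro q hq
    have h2 : v₁ x - v₁ q = ∫ t in q..x, g t := hv₁int x q
    have h3 : EqOn g 0 (uIcc q x) := by
      intro y hy
      rw [uIcc_of_le hq.2.le] at hy
      exact hJ y ⟨lt_of_lt_of_le hq.1 hy.1, lt_of_le_of_lt hy.2 hx.2⟩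
    rw [integral_congr h3] at h2
    simp at h2
    linarith
  have hsq : ∀ q ∈ Ioo P.xm x, P.s q = P.s x := by
    intro q hq
    have hxIoo : x ∈ Ioo P.xm P.xp := ⟨hx.1, lt_of_lt_of_le hx.2 (min_le_left _ _)⟩
    have hqIoo : q ∈ Ioo P.xm P.xp := ⟨hq.1, lt_trans hq.2 hxIoo.2⟩
    rw [P.hreg q hqIoo, P.hreg x hxIoo, hv₁const q hq]
  have h1 : Tendsto P.s (𝓝[>] P.xm) (𝓝 a) := by
    have := (P.cont.tendsto P.xm).mono_left (nhdsWithin_le_nhds (s := Ioi P.xm))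
    rwa [P.hsa P.xm le_rfl] at this
  have h2 : Tendsto P.s (𝓝[>] P.xm) (𝓝 (P.s x)) := by
    refine tendsto_const_nhds.congr' ?_
    filter_upwards [Ioo_mem_nhdsGT_of_mem ⟨le_refl P.xm, hx.1⟩] with q hq
    exact (hsq q hq).symm
  have h3 := tendsto_nhds_unique h1 h2
  have h4 := P.hsgt x hx.1
  rw [← h3] at h4
  exact lt_irrefl a h4

theorem xp_not_lt
    (hFanti : StrictAnti F) (hF0 : F 0 = 0) (hgF : ∀ x, F (g x) = f x - lam)
    (hv₁int : ∀ p q : ℝ, v₁ p - v₁ q = ∫ t in q..p, g t)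
    (hv₁c : Continuous v₁)
    (P : SolPack a b lam f v₁ u₁) (Q : SolPack a b lam f v₁ u₂)
    (hxm : P.xm = Q.xm) (h : P.xp < Q.xp) : False := by
  have hJ : ∀ y ∈ Ioo P.xp Q.xp, g y = 0 := by
    intro y hy
    have h1 : f y = lam := le_antisymm
      (Q.hflow y ⟨by rw [← hxm]; exact lt_trans P.hlt hy.1, hy.2⟩)
      (P.hfup y (Or.inr hy.1))
    refine hFanti.injective ?_
    rw [hgF, h1, hF0, sub_self]
  -- b = a + (v₁ P.xp - v₁ P.xm)
  have hb : b = a + (v₁ P.xp - v₁ P.xm) := by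
    have h1 : Tendsto P.s (𝓝[<] P.xp) (𝓝 b) := by
      have := (P.cont.tendsto P.xp).mono_left (nhdsWithin_le_nhds (s := Iio P.xp))
      rwa [P.hsb P.xp le_rfl] at this
    have h2 : Tendsto (fun y => a + (v₁ y - v₁ P.xm)) (𝓝[<] P.xp)
        (𝓝 (a + (v₁ P.xp - v₁ P.xm))) :=
      (tendsto_const_nhds.add ((hv₁c.tendsto P.xp).sub tendsto_const_nhds)).mono_left
        (nhdsWithin_le_nhds (s := Iio P.xp))
    have h3 : Tendsto P.s (𝓝[<] P.xp) (𝓝 (a + (v₁ P.xp - v₁ P.xm))) := by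
      refine h2.congr' ?_
      filter_upwards [Ioo_mem_nhdsLT_of_mem ⟨P.hlt, le_refl P.xp⟩] with q hq
      exact (P.hreg q hq).symm
    exact tendsto_nhds_unique h1 h3
  set x := (P.xp + Q.xp)/2 with hx'
  have hx : x ∈ Ioo P.xp Q.xp := ⟨by rw [hx']; linarith, by rw [hx']; linarith⟩
  have hv₁const : ∀ q ∈ Ioo P.xp x, v₁ q = v₁ x := by
    intro q hq
    have h2 : v₁ x - v₁ q = ∫ t in q..x, g t := hv₁int x q
    have h3 : EqOn g 0 (uIcc q x) := by
      intro y hy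
      rw [uIcc_of_le hq.2.le] at hy
      exact hJ y ⟨lt_of_lt_of_le hq.1 hy.1, lt_of_le_of_lt hy.2 hx.2⟩
    rw [integral_congr h3] at h2
    simp at h2
    linarith
  have hv₁x : v₁ x = v₁ P.xp := by
    have h1 : Tendsto v₁ (𝓝[>] P.xp) (𝓝 (v₁ P.xp)) :=
      (hv₁c.tendsto P.xp).mono_left (nhdsWithin_le_nhds (s := Ioi P.xp))
    have h2 : Tendsto v₁ (𝓝[>] P.xp) (𝓝 (v₁ x)) := by
      refine tendsto_const_nhds.congr' ?_
      filter_upwards [Ioo_mem_nhdsGT_of_mem ⟨le_refl P.xp, hx.1⟩] with q hq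
      exact (hv₁const q hq).symm
    exact tendsto_nhds_unique h2 h1
  have hQx : Q.s x = b := by
    have hxQ : x ∈ Ioo Q.xm Q.xp := ⟨by rw [← hxm]; exact lt_trans P.hlt hx.1, hx.2⟩
    rw [Q.hreg x hxQ, ← hxm, hv₁x, ← hb]
  have h5 := Q.hslt x hx.2
  rw [hQx] at h5
  exact lt_irrefl b h5

theorem packs_s_eq
    (hFanti : StrictAnti F) (hF0 : F 0 = 0) (hgF : ∀ x, F (g x) = f x - lam)
    (hv₁int : ∀ p q : ℝ, v₁ p - v₁ q = ∫ t in q..p, g t)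
    (hv₁c : Continuous v₁)
    (P : SolPack a b lam f v₁ u₁) (Q : SolPack a b lam f v₁ u₂) :
    ∀ x, P.s x = Q.s x := by
  have hxm : P.xm = Q.xm := by
    by_contra hne
    rcases lt_or_gt_of_ne hne with h | h
    · exact xm_not_lt hFanti hF0 hgF hv₁int hv₁c P Q h
    · exact xm_not_lt hFanti hF0 hgF hv₁int hv₁c Q P h
  have hxp : P.xp = Q.xp := by
    by_contra hne
    rcases lt_or_gt_of_ne hne with h | h
    · exact xp_not_lt hFanti hF0 hgF hv₁int hv₁c P Q hxm h
    · exact xp_not_lt hFanti hF0 hgF hv₁int hv₁c Q P hxm.symm h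
  intro x
  rcases le_or_gt x P.xm with h1 | h1
  · rw [P.hsa x h1, Q.hsa x (hxm ▸ h1)]
  rcases le_or_gt P.xp x with h2 | h2
  · rw [P.hsb x h2, Q.hsb x (hxp ▸ h2)]
  · rw [P.hreg x ⟨h1, h2⟩, Q.hreg x ⟨hxm ▸ h1, hxp ▸ h2⟩, hxm]
end
end OneDimAux

open Set Topology intervalIntegral in
set_option maxHeartbeats 1000000 in
/-- For `n = 1`, with `F` uniformly elliptic and `H` uniformly convex, any two
convex continuous viscosity solutions of `max {λ* + F(u'') - f, H(u')} = 0` on `ℝ` satisfying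
`u/ℓ → 1` at infinity differ by an additive constant. -/
theorem one_dimensional_uniqueness
    (θ Θ : ℝ) (hθ : 0 < θ) (hθΘ : θ ≤ Θ)
    (F : ℝ → ℝ)
    (hFell : ∀ m t : ℝ, 0 ≤ t →
      -Θ * t ≤ F (m + t) - F m ∧ F (m + t) - F m ≤ -θ * t)
    (hFhom : ∀ t : ℝ, 0 ≤ t → ∀ m : ℝ, F (t * m) = t * F m)
    (hFsadd : ∀ m m' : ℝ, F m + F m' ≤ F (m + m'))
    (H ℓ : ℝ → ℝ)
    (hH : Continuous H) (hH0 : H 0 < 0)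
    (hKcpt : IsCompact {p : ℝ | H p ≤ 0})
    (hKconv : StrictConvex ℝ {p : ℝ | H p ≤ 0})
    (hHconv : ConvexOn ℝ Set.univ H)
    (σ Sig : ℝ) (hσ : 0 < σ) (hSig : 0 < Sig)
    (hHsc : ConvexOn ℝ Set.univ fun p => H p - σ / 2 * p ^ 2)
    (hHSc : ConvexOn ℝ Set.univ fun p => Sig / 2 * p ^ 2 - H p)
    (hℓ : ∀ v : ℝ, IsGreatest {r : ℝ | ∃ p, H p ≤ 0 ∧ p * v = r} (ℓ v))
    (f : ℝ → ℝ)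
    (hf : ConvexOn ℝ Set.univ f)
    (hfsl : Tendsto (fun x => f x / |x|) (cocompact ℝ) atTop)
    (lamStar : ℝ)
    (hlam : ∃ u : ℝ → ℝ, Continuous u ∧
      IsSubsolutionEig1D F H f lamStar u ∧ IsSupersolutionEig1D F H f lamStar u ∧
      Tendsto (fun x => u x / ℓ x) (cocompact ℝ) (nhds 1))
    (u₁ u₂ : ℝ → ℝ)
    (hu₁c : Continuous u₁) (hu₂c : Continuous u₂)
    (hu₁conv : ConvexOn ℝ Set.univ u₁) (hu₂conv : ConvexOn ℝ Set.univ u₂)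
    (hu₁sub : IsSubsolutionEig1D F H f lamStar u₁)
    (hu₁sup : IsSupersolutionEig1D F H f lamStar u₁)
    (hu₂sub : IsSubsolutionEig1D F H f lamStar u₂)
    (hu₂sup : IsSupersolutionEig1D F H f lamStar u₂)
    (hu₁g : Tendsto (fun x => u₁ x / ℓ x) (cocompact ℝ) (nhds 1))
    (hu₂g : Tendsto (fun x => u₂ x / ℓ x) (cocompact ℝ) (nhds 1)) :
    ∃ c : ℝ, ∀ x, u₁ x - u₂ x = c := by
  classical
  -- the set K and its endpoints
  set K := {p : ℝ | H p ≤ 0} with hK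
  have hKne : K.Nonempty := ⟨0, hH0.le⟩
  have hKcl : IsClosed K := hKcpt.isClosed
  have hKbddA : BddAbove K := hKcpt.bddAbove
  have hKbddB : BddBelow K := hKcpt.bddBelow
  set a := sInf K with ha
  set b := sSup K with hb
  have haK : a ∈ K := hKcl.csInf_mem hKne hKbddB
  have hbK : b ∈ K := hKcl.csSup_mem hKne hKbddA
  -- a < 0 < b
  obtain ⟨δ, hδpos, hδ⟩ := Metric.eventually_nhds_iff.1
    (hH.continuousAt.eventually_lt_const hH0 : ∀ᶠ p in 𝓝 (0:ℝ), H p < 0)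
  have hδK : (δ/2 : ℝ) ∈ K ∧ (-(δ/2) : ℝ) ∈ K := by
    constructor <;>
    · refine le_of_lt (hδ ?_)
      rw [Real.dist_eq]
      rw [abs_sub_comm]
      simp [abs_of_nonneg, hδpos.le, abs_of_nonpos]
      rw [abs_of_nonneg (by linarith)] <;> linarith
  have ha0 : a < 0 := lt_of_le_of_lt (csInf_le hKbddB hδK.2) (by linarith)
  have hb0 : 0 < b := lt_of_lt_of_le (by linarith) (le_csSup hKbddA hδK.1)
  have hab : a < b := lt_trans ha0 hb0
  -- H < 0 on (a,b)
  have hHneg : ∀ r, a < r → r < b → H r < 0 := by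
    intro r har hrb
    rcases le_or_gt r 0 with hr0 | hr0
    · rcases eq_or_lt_of_le hr0 with rfl | hrneg
      · exact hH0
      · set t := r / a with ht
        have hane : a ≠ 0 := ne_of_lt ha0
        have htpos : 0 < t := div_pos_iff.2 (Or.inr ⟨hrneg, ha0⟩)
        have htlt : t < 1 := by
          rw [ht, div_lt_one_of_neg ha0]
          exact har
        have hcomb := hHconv.2 (mem_univ a) (mem_univ 0) htpos.le (by linarith)
          (by ring : t + (1 - t) = 1)
        simp only [smul_eq_mul, mul_zero, add_zero] at hcomb
        have hta : t * a = r := div_mul_cancel₀ r hane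
        rw [hta] at hcomb
        have h1 : t * H a ≤ 0 := mul_nonpos_iff.2 (Or.inl ⟨htpos.le, haK⟩)
        have h2 : (1 - t) * H 0 < 0 := mul_neg_of_pos_of_neg (by linarith) hH0
        linarith
    · set t := r / b with ht
      have hbne : b ≠ 0 := ne_of_gt hb0
      have htpos : 0 < t := div_pos hr0 hb0
      have htlt : t < 1 := (div_lt_one hb0).2 hrb
      have hcomb := hHconv.2 (mem_univ b) (mem_univ 0) htpos.le (by linarith)
        (by ring : t + (1 - t) = 1)
      simp only [smul_eq_mul, mul_zero, add_zero] at hcomb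
      have htb : t * b = r := div_mul_cancel₀ r hbne
      rw [htb] at hcomb
      have h1 : t * H b ≤ 0 := mul_nonpos_iff.2 (Or.inl ⟨htpos.le, hbK⟩)
      have h2 : (1 - t) * H 0 < 0 := mul_neg_of_pos_of_neg (by linarith) hH0
      linarith
  -- F basic facts
  have hFanti : StrictAnti F := by
    intro m m' h
    have h1 := (hFell m (m' - m) (by linarith)).2
    rw [show m + (m' - m) = m' by ring] at h1
    nlinarith
  have hF0 : F 0 = 0 := by
    have := hFhom 0 le_rfl 0
    simpa using this
  have hFlin : ∀ m : ℝ, 0 ≤ m → F m ≤ -θ * m := by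
    intro m hm
    have := (hFell 0 m hm).2
    rwa [zero_add, hF0, sub_zero] at this
  have hFup : ∀ m : ℝ, m ≤ 0 → -θ * m ≤ F m := by
    intro m hm
    have h1 := (hFell m (-m) (by linarith)).2
    rw [show m + -m = 0 by ring, hF0] at h1
    nlinarith
  have hΘ0 : 0 < Θ := lt_of_lt_of_le hθ hθΘ
  have hFcont : Continuous F := by
    have hlip : LipschitzWith (Real.toNNReal Θ) F := by
      apply LipschitzWith.of_dist_le_mul
      intro m m'
      rw [Real.dist_eq, Real.dist_eq, Real.coe_toNNReal Θ hΘ0.le]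
      rcases le_total m m' with h | h
      · have h1 := (hFell m (m' - m) (by linarith)).1
        have h2 := (hFell m (m' - m) (by linarith)).2
        rw [show m + (m' - m) = m' by ring] at h1 h2
        have h3 : |F m - F m'| ≤ Θ * (m' - m) := by
          rw [abs_le]; constructor <;> nlinarith
        rw [abs_of_nonpos (by linarith : m - m' ≤ 0)]
        calc |F m - F m'| ≤ Θ * (m' - m) := h3
          _ = Θ * -(m - m') := by ring
      · have h1 := (hFell m' (m - m') (by linarith)).1
        have h2 := (hFell m' (m - m') (by linarith)).2
        rw [show m' + (m - m') = m by ring] at h1 h2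
        have h3 : |F m - F m'| ≤ Θ * (m - m') := by
          rw [abs_le]; constructor <;> nlinarith
        rw [abs_of_nonneg (by linarith : (0:ℝ) ≤ m - m')]
        exact h3
    exact hlip.continuous
  -- inverse of F
  have hGmono : StrictMono (fun m => -F m) := fun m m' h => neg_lt_neg (hFanti h)
  have hGT : Tendsto (fun m => -F m) atTop atTop := by
    refine tendsto_atTop_mono' atTop ?_ (tendsto_id.const_mul_atTop hθ)
    filter_upwards [eventually_ge_atTop (0:ℝ)] with m hm
    have := hFlin m hm
    simp only [id_eq]
    linarith
  have hGB : Tendsto (fun m => -F m) atBot atBot := by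
    refine tendsto_atBot_mono' atBot ?_ (tendsto_id.const_mul_atBot hθ)
    filter_upwards [eventually_le_atBot (0:ℝ)] with m hm
    have := hFup m hm
    simp only [id_eq]
    linarith
  have hGsurj : Function.Surjective (fun m => -F m) := hFcont.neg.surjective hGT hGB
  set E := StrictMono.orderIsoOfSurjective _ hGmono hGsurj with hE
  set g : ℝ → ℝ := fun x => E.symm (-(f x - lamStar)) with hgdef
  have hgF : ∀ x, F (g x) = f x - lamStar := by
    intro x
    have h1 : E (E.symm (-(f x - lamStar))) = -(f x - lamStar) := E.apply_symm_apply _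
    have h2 : E (E.symm (-(f x - lamStar))) = -F (E.symm (-(f x - lamStar))) := rfl
    rw [h2] at h1
    simp only [hgdef]
    linarith
  have hfc : Continuous f := continuousOn_univ.1 (hf.continuousOn isOpen_univ)
  have hgcont : Continuous g := by
    have hsc : Continuous (E.symm : ℝ → ℝ) := OrderIso.continuous E.symm
    exact hsc.comp ((hfc.sub continuous_const).neg)
  set v₁ : ℝ → ℝ := fun x => ∫ t in (0:ℝ)..x, g t with hv₁def
  have hv₁d : ∀ x, HasDerivAt v₁ (g x) x := fun x =>
    intervalIntegral.integral_hasDerivAt_right (hgcont.intervalIntegrable 0 x)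
      (hgcont.aestronglyMeasurable.stronglyMeasurableAtFilter)
      hgcont.continuousAt
  have hv₁int : ∀ p q : ℝ, v₁ p - v₁ q = ∫ t in q..p, g t := by
    intro p q
    have h7 : (∫ t in (0:ℝ)..q, g t) + ∫ t in q..p, g t = ∫ t in (0:ℝ)..p, g t :=
      intervalIntegral.integral_add_adjacent_intervals
        (hgcont.intervalIntegrable 0 q) (hgcont.intervalIntegrable q p)
    simp only [hv₁def]
    linarith
  have hv₁c : Continuous v₁ := continuous_iff_continuousAt.2 fun x => (hv₁d x).continuousAt
  set v : ℝ → ℝ := fun x => ∫ t in (0:ℝ)..x, v₁ t with hvdef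
  have hvd : ∀ x, HasDerivAt v (v₁ x) x := fun x =>
    intervalIntegral.integral_hasDerivAt_right (hv₁c.intervalIntegrable 0 x)
      (hv₁c.aestronglyMeasurable.stronglyMeasurableAtFilter) hv₁c.continuousAt
  have hv2 : ContDiff ℝ 2 v := by
    rw [show (2 : WithTop ℕ∞) = 1 + 1 by norm_num, contDiff_succ_iff_deriv]
    refine ⟨fun x => (hvd x).differentiableAt, ?_, ?_⟩
    · intro h
      exact absurd h (by simp)
    · have hdv : deriv v = v₁ := funext fun x => (hvd x).deriv
      rw [hdv, contDiff_one_iff_deriv]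
      refine ⟨fun x => (hv₁d x).differentiableAt, ?_⟩
      have hdv₁ : deriv v₁ = g := funext fun x => (hv₁d x).deriv
      rw [hdv₁]; exact hgcont
  -- ℓ values
  have hℓT : ∀ x : ℝ, 0 < x → ℓ x = b * x := by
    intro x hx
    obtain ⟨⟨p, hp, hpx⟩, hub⟩ := hℓ x
    have h1 : b * x ≤ ℓ x := hub ⟨b, hbK, rfl⟩
    have h2 : p ≤ b := le_csSup hKbddA hp
    have h3 : ℓ x ≤ b * x := by rw [← hpx]; exact mul_le_mul_of_nonneg_right h2 hx.le
    linarith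
  have hℓB : ∀ x : ℝ, x < 0 → ℓ x = a * x := by
    intro x hx
    obtain ⟨⟨p, hp, hpx⟩, hub⟩ := hℓ x
    have h1 : a * x ≤ ℓ x := hub ⟨a, haK, rfl⟩
    have h2 : a ≤ p := csInf_le hKbddB hp
    have h3 : ℓ x ≤ a * x := by rw [← hpx]; exact mul_le_mul_of_nonpos_right h2 hx.le
    linarith
  have hcoT : atTop ≤ cocompact ℝ := by rw [cocompact_eq_atBot_atTop]; exact le_sup_right
  have hcoB : atBot ≤ cocompact ℝ := by rw [cocompact_eq_atBot_atTop]; exact le_sup_left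
  have hbne : b ≠ 0 := ne_of_gt hb0
  have hane : a ≠ 0 := ne_of_lt ha0
  have hlimT : ∀ u0 : ℝ → ℝ, Tendsto (fun x => u0 x / ℓ x) (cocompact ℝ) (𝓝 1) →
      Tendsto (fun y => u0 y / y) atTop (𝓝 b) := by
    intro u0 hu0
    have h1 : Tendsto (fun x => u0 x / ℓ x * b) atTop (𝓝 (1 * b)) :=
      (hu0.mono_left hcoT).mul_const b
    rw [one_mul] at h1
    refine h1.congr' ?_
    filter_upwards [eventually_gt_atTop (0:ℝ)] with y hy
    rw [hℓT y hy]
    have hyne : y ≠ 0 := ne_of_gt hy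
    field_simp
  have hlimB : ∀ u0 : ℝ → ℝ, Tendsto (fun x => u0 x / ℓ x) (cocompact ℝ) (𝓝 1) →
      Tendsto (fun y => u0 y / y) atBot (𝓝 a) := by
    intro u0 hu0
    have h1 : Tendsto (fun x => u0 x / ℓ x * a) atBot (𝓝 (1 * a)) :=
      (hu0.mono_left hcoB).mul_const a
    rw [one_mul] at h1
    refine h1.congr' ?_
    filter_upwards [eventually_lt_atBot (0:ℝ)] with y hy
    rw [hℓB y hy]
    have hyne : y ≠ 0 := ne_of_lt hy
    field_simp
  -- superlinearity
  have hfbigT : ∀ R : ℝ, ∃ x, R < x ∧ lamStar < f x := by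
    intro R
    have h1 : Tendsto (fun x => f x / |x|) atTop atTop := hfsl.mono_left hcoT
    have h2 := h1.eventually_ge_atTop (|lamStar| + 1)
    obtain ⟨x, hx1, hx2⟩ := (h2.and (eventually_gt_atTop (max R 1))).exists
    refine ⟨x, lt_of_le_of_lt (le_max_left R 1) hx2, ?_⟩
    have hxg : (1:ℝ) < x := lt_of_le_of_lt (le_max_right R 1) hx2
    have habs : |x| = x := abs_of_pos (by linarith)
    have h3 : (|lamStar| + 1) * |x| ≤ f x := by
      have hpos : (0:ℝ) < |x| := by rw [habs]; linarith
      exact (le_div_iff₀ hpos).1 hx1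
    nlinarith [le_abs_self lamStar, abs_nonneg lamStar]
  have hfbigB : ∀ R : ℝ, ∃ x, x < R ∧ lamStar < f x := by
    intro R
    have h1 : Tendsto (fun x => f x / |x|) atBot atTop := hfsl.mono_left hcoB
    have h2 := h1.eventually_ge_atTop (|lamStar| + 1)
    obtain ⟨x, hx1, hx2⟩ := (h2.and (eventually_lt_atBot (min R (-1)))).exists
    refine ⟨x, lt_of_lt_of_le hx2 (min_le_left R (-1)), ?_⟩
    have hxl : x < -1 := lt_of_lt_of_le hx2 (min_le_right R (-1))
    have habs : |x| = -x := abs_of_neg (by linarith)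
    have h3 : (|lamStar| + 1) * |x| ≤ f x := by
      have hpos : (0:ℝ) < |x| := by rw [habs]; linarith
      exact (le_div_iff₀ hpos).1 hx1
    nlinarith [le_abs_self lamStar, abs_nonneg lamStar]
  -- build packs and conclude
  obtain ⟨P₁⟩ := buildPack hθ hFanti hF0 hFlin hgF hgcont hv₁d hv₁int hv2 hvd hab hHneg
    hu₁conv hu₁c hu₁sub hu₁sup (hlimT u₁ hu₁g) (hlimB u₁ hu₁g) hfbigT hfbigB
  obtain ⟨P₂⟩ := buildPack hθ hFanti hF0 hFlin hgF hgcont hv₁d hv₁int hv2 hvd hab hHneg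
    hu₂conv hu₂c hu₂sub hu₂sup (hlimT u₂ hu₂g) (hlimB u₂ hu₂g) hfbigT hfbigB
  have hs := packs_s_eq hFanti hF0 hgF hv₁int hv₁c P₁ P₂
  have hdz : ∀ x, HasDerivAt (fun y => u₁ y - u₂ y) 0 x := by
    intro x
    have h1 := (P₁.hderiv x).sub (P₂.hderiv x)
    rw [hs x, sub_self] at h1
    exact h1
  refine ⟨u₁ 0 - u₂ 0, fun x => ?_⟩
  exact is_const_of_deriv_eq_zero (fun x => (hdz x).differentiableAt)
    (fun x => (hdz x).deriv) x 0
end
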